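/- arXiv:0911.5660 — 7 statements merged into one kernel-verified Lean document; each statement's English description precedes it below -/
import Mathlib

section
/- Let M be a matching and M_opt any matching in a bipartite graph. If every connected component of M ⊕ M_opt that is a path of odd length has at least as many M-edges as M_opt-edges, or has length at least 5 when it has more M_opt-edges, then |M_opt| ≤ (3/2)·|M|. -/
open scoped symmDiff

/-- `M` is a matching in the graph `G`: a set of edges of `G` no two of which
share a vertex. -/
def IsMatchingIn {V : Type*} (G : SimpleGraph V) (M : Finset (Sym2 V)) : Prop :=
  ↑M ⊆ G.edgeSet ∧ ∀ e ∈ M, ∀ f ∈ M, e ≠ f → ∀ v : V, v ∈ e → v ∉ f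

section ThreeHalvesAux

open SimpleGraph Walk List

namespace ThreeHalves



private lemma flen_cons {α} (P : α → Prop) [DecidablePred P] (a : α) (l : List α) :
    (List.filter (fun x => P x) (a :: l)).length
      = (if P a then 1 else 0) + (List.filter (fun x => P x) l).length := by
  by_cases h : P a <;> simp [h, Nat.add_comm]

private lemma alt_le {α} (P : α → Prop) [DecidablePred P] :
    ∀ l : List α, l.Chain' (fun a b => P a ↔ ¬ P b) →
      (l.filter (fun a => P a)).length ≤ (l.filter (fun a => ¬ P a)).length + 1 ∧
      (l.filter (fun a => ¬ P a)).length ≤ (l.filter (fun a => P a)).length + 1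
  | [] , _ => by simp
  | [a], _ => by by_cases h : P a <;> simp [h]
  | a :: b :: t, h => by
      have hab : P a ↔ ¬ P b := (List.isChain_cons_cons.mp h).1
      have ht := alt_le P t ((List.isChain_cons_cons.mp h).2.tail)
      rw [flen_cons P, flen_cons P, flen_cons (fun a => ¬ P a), flen_cons (fun a => ¬ P a)]
      by_cases hb : P b
      · have ha : ¬ P a := by tauto
        simp only [ha, hb, if_true, if_false, not_true, not_false_iff]
        omega
      · have ha : P a := by tauto
        simp only [ha, hb, if_true, if_false, not_true, not_false_iff]
        omega

private lemma alt_eq {α} (P : α → Prop) [DecidablePred P] :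
    ∀ l : List α, l.Chain' (fun a b => P a ↔ ¬ P b) →
      ∀ x y, l.head? = some x → l.getLast? = some y → (P x ↔ ¬ P y) →
      (l.filter (fun a => P a)).length = (l.filter (fun a => ¬ P a)).length
  | [], _, x, y, hx, hy, _ => by simp at hx
  | [a], _, x, y, hx, hy, hxy => by
      simp at hx hy; subst hx; subst hy; tauto
  | a :: b :: t, h, x, y, hx, hy, hxy => by
      have hab : P a ↔ ¬ P b := (List.isChain_cons_cons.mp h).1
      simp only [List.head?_cons, Option.some.injEq] at hx
      subst hx
      cases t with
      | nil =>
          simp at hy; subst hy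
          rw [flen_cons P, flen_cons P, flen_cons (fun a => ¬ P a), flen_cons (fun a => ¬ P a)]
          by_cases ha : P a
          · have hb : ¬ P b := by tauto
            simp [ha, hb]
          · have hb : P b := by tauto
            simp [ha, hb]
      | cons c t' =>
          have hbc : P b ↔ ¬ P c := ((List.isChain_cons_cons.mp h).2.rel_head)
          have hy' : (c :: t').getLast? = some y := by
            rw [← hy]; symm
            exact (List.getLast?_cons_cons ..).trans rfl
          have hcy : P c ↔ ¬ P y := by tauto
          have ht := alt_eq P (c :: t') ((List.isChain_cons_cons.mp h).2.tail) c y rfl hy' hcy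
          rw [flen_cons P, flen_cons P, flen_cons (fun a => ¬ P a), flen_cons (fun a => ¬ P a), ht]
          by_cases ha : P a
          · have hb : ¬ P b := by tauto
            simp [ha, hb]
          · have hb : P b := by tauto
            simp [ha, hb]

private lemma flen_add {α} (P Q : α → Prop) [DecidablePred P] [DecidablePred Q]
    (l : List α) (hpq : ∀ a ∈ l, (Q a ↔ ¬ P a)) :
    (l.filter (fun a => P a)).length + (l.filter (fun a => Q a)).length = l.length := by
  induction l with
  | nil => simp
  | cons a t ih =>
      rw [flen_cons P, flen_cons Q]
      have := hpq a (by simp)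
      have ht := ih (fun a ha => hpq a (by simp [ha]))
      by_cases h : P a
      · have : ¬ Q a := by tauto
        simp only [h, ‹¬ Q a›, if_true, if_false, List.length_cons]; omega
      · have : Q a := by tauto
        simp only [h, ‹Q a›, if_true, if_false, List.length_cons]; omega


variable {V : Type*} [DecidableEq V] {G : SimpleGraph V} {M Mopt : Finset (Sym2 V)}

/-- the symmetric difference graph -/
abbrev SDG (M Mopt : Finset (Sym2 V)) : SimpleGraph V :=
  SimpleGraph.fromEdgeSet ((M ∆ Mopt : Finset (Sym2 V)) : Set (Sym2 V))

lemma mem_D_of_adj {x y : V} (h : (SDG M Mopt).Adj x y) : s(x, y) ∈ M ∆ Mopt := by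
  rw [SimpleGraph.fromEdgeSet_adj] at h
  exact_mod_cast h.1

lemma mem_D_of_mem_edges {u v : V} {w : (SDG M Mopt).Walk u v} {f : Sym2 V}
    (h : f ∈ w.edges) : f ∈ M ∆ Mopt := by
  have := w.edges_subset_edgeSet h
  rw [SimpleGraph.edgeSet_fromEdgeSet] at this
  exact_mod_cast this.1

/-- two distinct edges of the symmetric difference sharing a vertex have opposite
membership in `M` -/
lemma mem_iff_not_mem (hM : IsMatchingIn G M) (hMopt : IsMatchingIn G Mopt)
    {e f : Sym2 V} (he : e ∈ M ∆ Mopt) (hf : f ∈ M ∆ Mopt) (hne : e ≠ f)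
    {w : V} (hwe : w ∈ e) (hwf : w ∈ f) : (e ∈ M) ↔ ¬ (f ∈ M) := by
  rw [Finset.mem_symmDiff] at he hf
  constructor
  · intro heM hfM
    exact hM.2 e heM f hfM hne w hwe hwf
  · intro hfnM
    by_contra henM
    have heo : e ∈ Mopt := by tauto
    have hfo : f ∈ Mopt := by tauto
    exact hMopt.2 e heo f hfo hne w hwe hwf

/-- degree at most two -/
lemma eq_or_eq_or_eq (hM : IsMatchingIn G M) (hMopt : IsMatchingIn G Mopt)
    {v x y z : V} (hx : (SDG M Mopt).Adj v x) (hy : (SDG M Mopt).Adj v y)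
    (hz : (SDG M Mopt).Adj v z) : x = y ∨ x = z ∨ y = z := by
  by_contra hc
  push_neg at hc
  obtain ⟨hxy, hxz, hyz⟩ := hc
  have h1 := mem_iff_not_mem hM hMopt (mem_D_of_adj hx) (mem_D_of_adj hy)
    (by intro hEq; rw [Sym2.eq_iff] at hEq; have := hx.ne'; have := hy.ne'; tauto)
    (Sym2.mem_mk_left v x) (Sym2.mem_mk_left v y)
  have h2 := mem_iff_not_mem hM hMopt (mem_D_of_adj hy) (mem_D_of_adj hz)
    (by intro hEq; rw [Sym2.eq_iff] at hEq; have := hy.ne'; have := hz.ne'; tauto)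
    (Sym2.mem_mk_left v y) (Sym2.mem_mk_left v z)
  have h3 := mem_iff_not_mem hM hMopt (mem_D_of_adj hx) (mem_D_of_adj hz)
    (by intro hEq; rw [Sym2.eq_iff] at hEq; have := hx.ne'; have := hz.ne'; tauto)
    (Sym2.mem_mk_left v x) (Sym2.mem_mk_left v z)
  tauto

/-- edges of a trail in the symmetric-difference graph alternate -/
lemma edges_chain (hM : IsMatchingIn G M) (hMopt : IsMatchingIn G Mopt)
    {u v : V} (w : (SDG M Mopt).Walk u v) : w.IsTrail →
      w.edges.Chain' (fun e f => (e ∈ M) ↔ ¬ (f ∈ M)) := by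
  induction w with
  | nil => intro _; exact List.isChain_nil
  | @cons u b v h q ih =>
      intro ht
      rw [Walk.edges_cons]; show List.IsChain _ _; rw [List.isChain_cons]
      refine ⟨?_, ih ht.of_cons⟩
      intro y hy
      cases q with
      | nil => simp at hy
      | @cons b c v h2 q2 =>
          simp only [Walk.edges_cons, List.head?_cons, Option.mem_some_iff] at hy
          subst hy
          have hne : s(u, b) ≠ s(b, c) := by
            have := ht.edges_nodup
            rw [Walk.edges_cons, List.nodup_cons] at this
            intro hcontra
            exact this.1 (by rw [hcontra]; simp [Walk.edges_cons])
          exact mem_iff_not_mem hM hMopt (mem_D_of_adj h) (mem_D_of_adj h2) hne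
            (Sym2.mem_mk_right u b) (Sym2.mem_mk_left b c)

/-- head edge of a positive-length walk -/
lemma exists_head_edge {G' : SimpleGraph V} {a b : V} (w : G'.Walk a b)
    (hl : 0 < w.length) : ∃ x, G'.Adj a x ∧ w.edges.head? = some s(a, x) := by
  cases w with
  | nil => simp at hl
  | cons h q => exact ⟨_, h, by simp⟩

lemma exists_last_edge {G' : SimpleGraph V} {a b : V} (w : G'.Walk a b)
    (h : 0 < w.length) : ∃ x, G'.Adj b x ∧ w.edges.getLast? = some s(b, x) := by
  obtain ⟨x, hx, he⟩ := exists_head_edge w.reverse (by simp [h])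
  refine ⟨x, hx, ?_⟩
  rw [Walk.edges_reverse, List.head?_reverse] at he
  exact he

/-- interior vertices of a path have both their possible edges on the path -/
lemma path_closed_interior (hM : IsMatchingIn G M) (hMopt : IsMatchingIn G Mopt)
    {u v : V} (p : (SDG M Mopt).Walk u v) : p.IsPath →
    ∀ m ∈ p.support, m ≠ u → m ≠ v → ∀ x, (SDG M Mopt).Adj m x → s(m, x) ∈ p.edges := by
  induction p with
  | nil => intro _ m hm hmu _ _ _; simp at hm; exact absurd hm hmu
  | @cons u b v h q ih =>
      intro hp m hm hmu hmv x hx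
      rw [Walk.support_cons, List.mem_cons] at hm
      rcases hm with hm | hm
      · exact absurd hm hmu
      by_cases hmb : m = b
      · subst hmb
        cases q with
        | nil => exact absurd rfl hmv
        | @cons b c v2 h2 q2 =>
            have hpq := (Walk.cons_isPath_iff h _).mp hp
            have huc : u ≠ c := by
              intro hEq
              apply hpq.2
              rw [hEq, Walk.support_cons]
              exact List.mem_cons_of_mem _ (Walk.start_mem_support _)
            rcases eq_or_eq_or_eq hM hMopt hx h.symm h2 with h' | h' | h'
            · subst h'; rw [Sym2.eq_swap, Walk.edges_cons]
              exact List.mem_cons_self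
            · subst h'; rw [Walk.edges_cons, Walk.edges_cons]
              exact List.mem_cons_of_mem _ List.mem_cons_self
            · exact absurd h' huc
      · have := ih hp.of_cons m hm hmb hmv x hx
        simp [Walk.edges_cons, this]

lemma cycle_closed (hM : IsMatchingIn G M) (hMopt : IsMatchingIn G Mopt)
    {a : V} (c : (SDG M Mopt).Walk a a) (hc : c.IsCycle) :
    ∀ m ∈ c.support, ∀ x, (SDG M Mopt).Adj m x → s(m, x) ∈ c.edges := by
  suffices hstart : ∀ (a : V) (c : (SDG M Mopt).Walk a a), c.IsCycle →
      ∀ x, (SDG M Mopt).Adj a x → s(a, x) ∈ c.edges by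
    intro m hm x hx
    have := hstart m (c.rotate m hm) (hc.rotate hm) x hx
    exact (c.rotate_edges m hm).mem_iff.mp this
  intro a c hc x hx
  cases c with
  | nil => exact absurd rfl hc.ne_nil
  | @cons a b _ h q =>
      have h3 : 3 ≤ q.length + 1 := by simpa using hc.three_le_length
      obtain ⟨d, hd, hlast⟩ := exists_last_edge q (by omega)
      have hmem : s(a, d) ∈ q.edges := List.mem_of_mem_getLast? (by rw [hlast]; rfl)
      have hnodup := hc.edges_nodup
      rw [Walk.edges_cons, List.nodup_cons] at hnodup
      have hbd : b ≠ d := by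
        intro hEq; subst hEq; exact hnodup.1 hmem
      rcases eq_or_eq_or_eq hM hMopt hx h hd with h' | h' | h'
      · subst h'; simp [Walk.edges_cons]
      · subst h'; simp [Walk.edges_cons, hmem]
      · exact absurd h' hbd

lemma extend (hM : IsMatchingIn G M) (hMopt : IsMatchingIn G Mopt) [Fintype V]
    (n : ℕ) : ∀ {u v : V} (p : (SDG M Mopt).Walk u v), p.IsPath → 0 < p.length →
      Fintype.card V ≤ p.length + n →
    (∃ (a b : V) (q : (SDG M Mopt).Walk a b), q.IsPath ∧ 0 < q.length ∧
        (∀ e ∈ p.edges, e ∈ q.edges) ∧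
        (∀ x, (SDG M Mopt).Adj a x → s(a, x) ∈ q.edges) ∧
        (∀ x, (SDG M Mopt).Adj b x → s(b, x) ∈ q.edges)) ∨
    (∃ (a : V) (c : (SDG M Mopt).Walk a a), c.IsCycle ∧ ∀ e ∈ p.edges, e ∈ c.edges) := by
  induction n with
  | zero =>
      intro u v p hp _ hcard
      have := hp.length_lt
      omega
  | succ n ih =>
      intro u v p hp hl hcard
      by_cases hu : ∀ x, (SDG M Mopt).Adj u x → s(u, x) ∈ p.edges
      · by_cases hv : ∀ x, (SDG M Mopt).Adj v x → s(v, x) ∈ p.edges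
        · exact Or.inl ⟨u, v, p, hp, hl, fun e he => he, hu, hv⟩
        · push_neg at hv
          obtain ⟨x, hx, hxe⟩ := hv
          by_cases hxs : x ∈ p.support
          · -- closes into a cycle
            have hxv : x ≠ v := fun hEq => (hEq ▸ hx).ne rfl
            have hxu : x = u := by
              by_contra hxu
              have := path_closed_interior hM hMopt p hp x hxs hxu hxv v hx.symm
              rw [Sym2.eq_swap] at this
              exact hxe this
            subst hxu
            refine Or.inr ⟨v, Walk.cons hx p, ?_, fun e he => by simp [he]⟩
            exact (Walk.cons_isCycle_iff p hx).mpr ⟨hp, hxe⟩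
          · -- extend at the far end
            have hp' : (Walk.cons hx.symm p.reverse).IsPath := by
              rw [Walk.cons_isPath_iff]
              exact ⟨(Walk.isPath_reverse_iff p).mpr hp,
                by rwa [Walk.support_reverse, List.mem_reverse]⟩
            have hp'' : (Walk.cons hx.symm p.reverse).reverse.IsPath :=
              (Walk.isPath_reverse_iff _).mpr hp'
            have hlen : (Walk.cons hx.symm p.reverse).reverse.length = p.length + 1 := by
              simp [Walk.length_reverse]
            rcases ih (Walk.cons hx.symm p.reverse).reverse hp''
                (by omega) (by omega) with h' | h'
            · obtain ⟨a, b, q, h1, h2, h3, h4, h5⟩ := h'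
              refine Or.inl ⟨a, b, q, h1, h2, fun e he => h3 e ?_, h4, h5⟩
              simp [Walk.edges_reverse, Walk.edges_cons, List.mem_reverse, he]
            · obtain ⟨a, c, h1, h2⟩ := h'
              refine Or.inr ⟨a, c, h1, fun e he => h2 e ?_⟩
              simp [Walk.edges_reverse, Walk.edges_cons, List.mem_reverse, he]
      · push_neg at hu
        obtain ⟨x, hx, hxe⟩ := hu
        by_cases hxs : x ∈ p.support
        · have hxu : x ≠ u := fun hEq => (hEq ▸ hx).ne' rfl
          have hxv : x = v := by
            by_contra hxv
            have := path_closed_interior hM hMopt p hp x hxs hxu hxv u hx.symm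
            rw [Sym2.eq_swap] at this
            exact hxe this
          subst hxv
          refine Or.inr ⟨x, Walk.cons hx.symm p, ?_, fun e he => by simp [he]⟩
          refine (Walk.cons_isCycle_iff p hx.symm).mpr ⟨hp, ?_⟩
          rwa [Sym2.eq_swap] at hxe
        · have hp' : (Walk.cons hx.symm p).IsPath := by
            rw [Walk.cons_isPath_iff]; exact ⟨hp, hxs⟩
          rcases ih (Walk.cons hx.symm p) hp' (by simp) (by simp; omega) with h' | h'
          · obtain ⟨a, b, q, h1, h2, h3, h4, h5⟩ := h'
            exact Or.inl ⟨a, b, q, h1, h2, fun e he => h3 e (by simp [he]), h4, h5⟩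
          · obtain ⟨a, c, h1, h2⟩ := h'
            exact Or.inr ⟨a, c, h1, fun e he => h2 e (by simp [he])⟩

lemma filter_opt_eq (l : List (Sym2 V)) (hl : ∀ e ∈ l, e ∈ M ∆ Mopt) :
    l.filter (fun e => e ∈ Mopt) = l.filter (fun e => ¬ (e ∈ M)) := by
  apply List.filter_congr
  intro e he
  have := hl e he
  rw [Finset.mem_symmDiff] at this
  simp only [decide_eq_decide]
  tauto

lemma head_ne_last {α : Type*} {l : List α} (hn : l.Nodup) {x y : α}
    (hx : l.head? = some x) (hy : l.getLast? = some y) (h2 : 2 ≤ l.length) : x ≠ y := by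
  cases l with
  | nil => simp at hx
  | cons a t =>
      cases t with
      | nil => simp at h2
      | cons b t' =>
          simp only [List.head?_cons, Option.some.injEq] at hx
          subst hx
          rw [List.getLast?_cons_cons] at hy
          have hyt : y ∈ b :: t' := List.mem_of_mem_getLast? (by rw [hy]; rfl)
          rw [List.nodup_cons] at hn
          intro hEq
          exact hn.1 (hEq ▸ hyt)

lemma cycle_count (hM : IsMatchingIn G M) (hMopt : IsMatchingIn G Mopt)
    {a : V} (c : (SDG M Mopt).Walk a a) (hc : c.IsCycle) :
    (c.edges.filter (fun e => e ∈ Mopt)).length = (c.edges.filter (fun e => e ∈ M)).length := by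
  have h3 : 3 ≤ c.length := hc.three_le_length
  obtain ⟨x1, hx1, hhead⟩ := exists_head_edge c (by omega)
  obtain ⟨x2, hx2, hlast⟩ := exists_last_edge c (by omega)
  have he1 : s(a, x1) ∈ c.edges := List.mem_of_mem_head? (by rw [hhead]; rfl)
  have he2 : s(a, x2) ∈ c.edges := List.mem_of_mem_getLast? (by rw [hlast]; rfl)
  have hne : s(a, x1) ≠ s(a, x2) :=
    head_ne_last hc.edges_nodup hhead hlast (by rw [Walk.length_edges]; omega)
  have hrel : (s(a, x1) ∈ M) ↔ ¬ (s(a, x2) ∈ M) :=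
    mem_iff_not_mem hM hMopt (mem_D_of_mem_edges he1) (mem_D_of_mem_edges he2) hne
      (Sym2.mem_mk_left a x1) (Sym2.mem_mk_left a x2)
  have := alt_eq (fun e => e ∈ M) c.edges (edges_chain hM hMopt c hc.isTrail)
    s(a, x1) s(a, x2) hhead hlast hrel
  rw [filter_opt_eq c.edges (fun e he => mem_D_of_mem_edges he), ← this]

/-- the hypothesis of the theorem, as a predicate -/
def Hyp (M Mopt : Finset (Sym2 V)) : Prop :=
  ∀ (u v : V) (p : (SDG M Mopt).Walk u v), p.IsPath → Odd p.length →
    (∀ x : V, (SDG M Mopt).Adj u x → s(u, x) ∈ p.edges) →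
    (∀ x : V, (SDG M Mopt).Adj v x → s(v, x) ∈ p.edges) →
    ((p.edges.filter (fun e => e ∈ Mopt)).length ≤ (p.edges.filter (fun e => e ∈ M)).length ∨
      ((p.edges.filter (fun e => e ∈ M)).length < (p.edges.filter (fun e => e ∈ Mopt)).length ∧
        5 ≤ p.length))

lemma mem_support_of_mem_edge {u v w : V} {q : (SDG M Mopt).Walk u v} {f : Sym2 V}
    (hf : f ∈ q.edges) (hw : w ∈ f) : w ∈ q.support := by
  induction f with
  | _ s t =>
      rcases Sym2.mem_iff.mp hw with h | h
      · subst h; exact q.fst_mem_support_of_mem_edges hf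
      · subst h; rw [Sym2.eq_swap] at hf; exact q.fst_mem_support_of_mem_edges hf

lemma component (hM : IsMatchingIn G M) (hMopt : IsMatchingIn G Mopt) [Fintype V]
    (hyp : Hyp M Mopt) {e : Sym2 V} (he : e ∈ Mopt \ M) :
    ∃ C : Finset (Sym2 V), e ∈ C ∧ ↑C ⊆ (M ∆ Mopt : Finset (Sym2 V)) ∧
      (∀ (w x : V), (SDG M Mopt).Adj w x → (∃ f ∈ C, w ∈ f) → s(w, x) ∈ C) ∧
      2 * (C.filter (fun f => f ∈ Mopt)).card ≤ 3 * (C.filter (fun f => f ∈ M)).card := by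
  rw [Finset.mem_sdiff] at he
  have hD : e ∈ M ∆ Mopt := Finset.mem_symmDiff.mpr (Or.inr ⟨he.1, he.2⟩)
  have hnd : ¬ e.IsDiag := SimpleGraph.not_isDiag_of_mem_edgeSet G (hMopt.1 he.1)
  induction e with
  | _ x y =>
  have hxy : x ≠ y := by simpa using hnd
  have hadj : (SDG M Mopt).Adj x y :=
    (SimpleGraph.fromEdgeSet_adj _).mpr ⟨by exact_mod_cast hD, hxy⟩
  have hp0 : (Walk.cons hadj Walk.nil).IsPath := by
    rw [Walk.cons_isPath_iff]; simp [hxy]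
  rcases extend hM hMopt (Fintype.card V) (Walk.cons hadj Walk.nil) hp0 (by simp)
      (by rw [Walk.length_cons, Walk.length_nil]; omega) with hres | hres
  · obtain ⟨a, b, q, hq, hql, hqe, hmaxa, hmaxb⟩ := hres
    refine ⟨q.edges.toFinset, ?_, ?_, ?_, ?_⟩
    · simp only [List.mem_toFinset]
      exact hqe s(x, y) (by simp)
    · intro f hf
      simp only [Finset.mem_coe, List.mem_toFinset] at hf
      exact_mod_cast mem_D_of_mem_edges hf
    · intro w z hadj' hex
      obtain ⟨f, hf, hwf⟩ := hex
      rw [List.mem_toFinset] at hf ⊢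
      have hws : w ∈ q.support := mem_support_of_mem_edge hf hwf
      by_cases hwa : w = a
      · subst hwa; exact hmaxa z hadj'
      by_cases hwb : w = b
      · subst hwb; exact hmaxb z hadj'
      exact path_closed_interior hM hMopt q hq w hws hwa hwb z hadj'
    · -- counting
      have hcardM : (q.edges.toFinset.filter (fun f => f ∈ M)).card
          = (q.edges.filter (fun f => f ∈ M)).length := by
        rw [show q.edges.toFinset.filter (fun f => f ∈ M)
              = (q.edges.filter (fun f => f ∈ M)).toFinset by
            ext f; simp [List.mem_filter],
          List.toFinset_card_of_nodup (hq.isTrail.edges_nodup.filter _)]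
      have hcardMo : (q.edges.toFinset.filter (fun f => f ∈ Mopt)).card
          = (q.edges.filter (fun f => f ∈ Mopt)).length := by
        rw [show q.edges.toFinset.filter (fun f => f ∈ Mopt)
              = (q.edges.filter (fun f => f ∈ Mopt)).toFinset by
            ext f; simp [List.mem_filter],
          List.toFinset_card_of_nodup (hq.isTrail.edges_nodup.filter _)]
      rw [hcardM, hcardMo]
      set na := (q.edges.filter (fun f => f ∈ M)).length with hna
      set nb := (q.edges.filter (fun f => f ∈ Mopt)).length with hnb
      have halt := alt_le (fun f => f ∈ M) q.edges (edges_chain hM hMopt q hq.isTrail)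
      rw [← filter_opt_eq q.edges (fun f hf => mem_D_of_mem_edges hf)] at halt
      have halt' : na ≤ nb + 1 ∧ nb ≤ na + 1 := halt
      clear halt
      have hsum : na + nb = q.length := by
        rw [← Walk.length_edges]
        exact flen_add _ _ q.edges (fun f hf => by
          have := mem_D_of_mem_edges (w := q) hf
          rw [Finset.mem_symmDiff] at this
          tauto)
      by_cases hba : nb ≤ na
      · omega
      · have hodd : Odd q.length := by
          rw [← hsum]
          have : nb = na + 1 := by omega
          exact ⟨na, by omega⟩
        rcases hyp a b q hq hodd hmaxa hmaxb with h' | h'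
        · omega
        · omega
  · obtain ⟨a, c, hc, hce⟩ := hres
    refine ⟨c.edges.toFinset, ?_, ?_, ?_, ?_⟩
    · simp only [List.mem_toFinset]
      exact hce s(x, y) (by simp)
    · intro f hf
      simp only [Finset.mem_coe, List.mem_toFinset] at hf
      exact_mod_cast mem_D_of_mem_edges hf
    · intro w z hadj' hex
      obtain ⟨f, hf, hwf⟩ := hex
      rw [List.mem_toFinset] at hf ⊢
      exact cycle_closed hM hMopt c hc w (mem_support_of_mem_edge hf hwf) z hadj'
    · have hcardM : (c.edges.toFinset.filter (fun f => f ∈ M)).card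
          = (c.edges.filter (fun f => f ∈ M)).length := by
        rw [show c.edges.toFinset.filter (fun f => f ∈ M)
              = (c.edges.filter (fun f => f ∈ M)).toFinset by
            ext f; simp [List.mem_filter],
          List.toFinset_card_of_nodup (hc.isTrail.edges_nodup.filter _)]
      have hcardMo : (c.edges.toFinset.filter (fun f => f ∈ Mopt)).card
          = (c.edges.filter (fun f => f ∈ Mopt)).length := by
        rw [show c.edges.toFinset.filter (fun f => f ∈ Mopt)
              = (c.edges.filter (fun f => f ∈ Mopt)).toFinset by
            ext f; simp [List.mem_filter],
          List.toFinset_card_of_nodup (hc.isTrail.edges_nodup.filter _)]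
      rw [hcardM, hcardMo, cycle_count hM hMopt c hc]
      omega

lemma sdiff_matching (hM : IsMatchingIn G M) (C : Finset (Sym2 V)) :
    IsMatchingIn G (M \ C) := by
  constructor
  · intro f hf
    rw [Finset.mem_coe, Finset.mem_sdiff] at hf
    exact hM.1 hf.1
  · intro e he f hf hne v hve hvf
    rw [Finset.mem_sdiff] at he hf
    exact hM.2 e he.1 f hf.1 hne v hve hvf

lemma symmDiff_sdiff (C : Finset (Sym2 V)) :
    (M \ C) ∆ (Mopt \ C) = (M ∆ Mopt) \ C := by
  ext f
  simp only [Finset.mem_symmDiff, Finset.mem_sdiff]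
  tauto

lemma sdiff_sdiff_eq (C : Finset (Sym2 V)) :
    (Mopt \ C) \ (M \ C) = (Mopt \ M) \ C := by
  ext f
  simp only [Finset.mem_sdiff]
  tauto

lemma hyp_transfer (hyp : Hyp M Mopt) {C : Finset (Sym2 V)}
    (hclosed : ∀ (w x : V), (SDG M Mopt).Adj w x → (∃ f ∈ C, w ∈ f) → s(w, x) ∈ C) :
    Hyp (M \ C) (Mopt \ C) := by
  intro u v r hr hodd hmaxu hmaxv
  have hDeq : ((M \ C) ∆ (Mopt \ C) : Finset (Sym2 V)) = (M ∆ Mopt) \ C :=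
    symmDiff_sdiff C
  have hle : SDG (M \ C) (Mopt \ C) ≤ SDG M Mopt := by
    apply SimpleGraph.fromEdgeSet_mono
    rw [hDeq]
    intro f hf
    rw [Finset.mem_coe, Finset.mem_sdiff] at hf
    exact_mod_cast hf.1
  have hedges : ∀ f ∈ r.edges, f ∈ (SDG M Mopt).edgeSet :=
    fun f hf => SimpleGraph.edgeSet_mono hle (r.edges_subset_edgeSet hf)
  set r' := r.transfer (SDG M Mopt) hedges with hr'def
  have hredges : r'.edges = r.edges := r.edges_transfer hedges
  have hrlen : r'.length = r.length := by
    rw [← Walk.length_edges, ← Walk.length_edges, hredges]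
  have hnotC : ∀ f ∈ r.edges, f ∉ C := by
    intro f hf
    have := mem_D_of_mem_edges (M := M \ C) (Mopt := Mopt \ C) hf
    rw [hDeq, Finset.mem_sdiff] at this
    exact this.2
  have hlen0 : 0 < r.length := by rcases hodd with ⟨m, hm⟩; omega
  have hmax' : ∀ (w : V),
      (∃ x0, (SDG (M \ C) (Mopt \ C)).Adj w x0 ∧ s(w, x0) ∈ r.edges) →
      (∀ x, (SDG (M \ C) (Mopt \ C)).Adj w x → s(w, x) ∈ r.edges) →
      ∀ x, (SDG M Mopt).Adj w x → s(w, x) ∈ r'.edges := by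
    intro w hw hmax x hadj
    rw [hredges]
    by_cases hfC : s(w, x) ∈ C
    · exfalso
      obtain ⟨x0, hx0, hx0e⟩ := hw
      have hx0' : (SDG M Mopt).Adj w x0 := hle hx0
      have := hclosed w x0 hx0' ⟨s(w, x), hfC, Sym2.mem_mk_left w x⟩
      exact hnotC _ hx0e this
    · apply hmax
      rw [SimpleGraph.fromEdgeSet_adj]
      refine ⟨?_, hadj.ne⟩
      have hD : s(w, x) ∈ M ∆ Mopt := mem_D_of_adj hadj
      have : s(w, x) ∈ (M ∆ Mopt) \ C := Finset.mem_sdiff.mpr ⟨hD, hfC⟩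
      rw [← hDeq] at this
      exact_mod_cast this
  have hmaxu' := hmax' u (by
    obtain ⟨x0, hx0, hh⟩ := exists_head_edge r hlen0
    exact ⟨x0, hx0, List.mem_of_mem_head? (by rw [hh]; rfl)⟩) hmaxu
  have hmaxv' := hmax' v (by
    obtain ⟨x0, hx0, hh⟩ := exists_last_edge r hlen0
    exact ⟨x0, hx0, List.mem_of_mem_getLast? (by rw [hh]; rfl)⟩) hmaxv
  have hfiltM : r.edges.filter (fun e => e ∈ (M \ C)) = r.edges.filter (fun e => e ∈ M) := by
    apply List.filter_congr
    intro f hf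
    have := hnotC f hf
    simp only [decide_eq_decide, Finset.mem_sdiff]
    tauto
  have hfiltMo : r.edges.filter (fun e => e ∈ (Mopt \ C))
      = r.edges.filter (fun e => e ∈ Mopt) := by
    apply List.filter_congr
    intro f hf
    have := hnotC f hf
    simp only [decide_eq_decide, Finset.mem_sdiff]
    tauto
  have := hyp u v r' (hr.transfer hedges) (by rwa [hrlen]) hmaxu' hmaxv'
  rw [hredges, hrlen] at this
  rw [hfiltM, hfiltMo]
  exact this

lemma main [Fintype V] (hG : True) :
    ∀ (k : ℕ) (M Mopt : Finset (Sym2 V)), IsMatchingIn G M → IsMatchingIn G Mopt →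
      Hyp M Mopt → (Mopt \ M).card ≤ k →
      2 * (Mopt \ M).card ≤ 3 * (M \ Mopt).card := by
  intro k
  induction k with
  | zero =>
      intro M Mopt _ _ _ hk
      omega
  | succ k ih =>
      intro M Mopt hM hMopt hyp hk
      rcases Finset.eq_empty_or_nonempty (Mopt \ M) with hemp | ⟨e, he⟩
      · rw [hemp]; simp
      obtain ⟨C, heC, hCD, hclosed, hcount⟩ := component hM hMopt hyp he
      have hM' := sdiff_matching hM C
      have hMopt' := sdiff_matching (M := Mopt) hMopt C
      have hyp' := hyp_transfer hyp hclosed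
      have hkey : ((Mopt \ M) \ C).card ≤ k := by
        have hlt : ((Mopt \ M) \ C).card < (Mopt \ M).card := by
          apply Finset.card_lt_card
          constructor
          · exact Finset.sdiff_subset
          · intro hsub
            have := hsub he
            rw [Finset.mem_sdiff] at this
            exact this.2 heC
        omega
      have hIH := ih (M \ C) (Mopt \ C) hM' hMopt' hyp' (by rwa [sdiff_sdiff_eq C])
      rw [sdiff_sdiff_eq C] at hIH
      have hsd2 : (M \ C) \ (Mopt \ C) = (M \ Mopt) \ C := by
        ext f; simp only [Finset.mem_sdiff]; tauto
      rw [hsd2] at hIH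
      -- relate intersections with filters
      have hBint : (Mopt \ M) ∩ C = C.filter (fun f => f ∈ Mopt) := by
        ext f
        simp only [Finset.mem_inter, Finset.mem_sdiff, Finset.mem_filter]
        constructor
        · tauto
        · intro ⟨h1, h2⟩
          have hD : f ∈ M ∆ Mopt := hCD h1
          rw [Finset.mem_symmDiff] at hD
          tauto
      have hAint : (M \ Mopt) ∩ C = C.filter (fun f => f ∈ M) := by
        ext f
        simp only [Finset.mem_inter, Finset.mem_sdiff, Finset.mem_filter]
        constructor
        · tauto
        · intro ⟨h1, h2⟩
          have hD : f ∈ M ∆ Mopt := hCD h1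
          rw [Finset.mem_symmDiff] at hD
          tauto
      have hsplitB := Finset.card_sdiff_add_card_inter (Mopt \ M) C
      have hsplitA := Finset.card_sdiff_add_card_inter (M \ Mopt) C
      rw [hBint] at hsplitB
      rw [hAint] at hsplitA
      omega

end ThreeHalves

end ThreeHalvesAux

/-- let `M`, `Mopt` be matchings in a finite bipartite graph.  If
every connected component of `M ∆ Mopt` (paths in the symmetric difference
graph that cannot be extended at either endpoint) that is a path of odd
length has at least as many `M`-edges as `Mopt`-edges, or has length at least
`5` when it has more `Mopt`-edges, then `|Mopt| ≤ (3/2)·|M|`. -/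
theorem odd_components_condition_implies_three_halves
    {V : Type*} [Fintype V] [DecidableEq V] (G : SimpleGraph V)
    (hbip : G.Colorable 2)
    (M Mopt : Finset (Sym2 V)) (hM : IsMatchingIn G M) (hMopt : IsMatchingIn G Mopt)
    (h : ∀ (u v : V)
      (p : (SimpleGraph.fromEdgeSet ((M ∆ Mopt : Finset (Sym2 V)) : Set (Sym2 V))).Walk u v),
      p.IsPath → Odd p.length →
      (∀ x : V, (SimpleGraph.fromEdgeSet ((M ∆ Mopt : Finset (Sym2 V)) : Set (Sym2 V))).Adj u x →
        s(u, x) ∈ p.edges) →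
      (∀ x : V, (SimpleGraph.fromEdgeSet ((M ∆ Mopt : Finset (Sym2 V)) : Set (Sym2 V))).Adj v x →
        s(v, x) ∈ p.edges) →
      ((p.edges.filter (fun e => e ∈ Mopt)).length ≤ (p.edges.filter (fun e => e ∈ M)).length ∨
        ((p.edges.filter (fun e => e ∈ M)).length < (p.edges.filter (fun e => e ∈ Mopt)).length ∧
          5 ≤ p.length))) :
    (Mopt.card : ℝ) ≤ 3 / 2 * M.card := by
  classical
  have h2 : 2 * (Mopt \ M).card ≤ 3 * (M \ Mopt).card :=
    ThreeHalves.main (G := G) trivial (Mopt \ M).card M Mopt hM hMopt h le_rfl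
  have e1 := Finset.card_sdiff_add_card_inter Mopt M
  have e2 := Finset.card_sdiff_add_card_inter M Mopt
  have e3 : (Mopt ∩ M).card = (M ∩ Mopt).card := by rw [Finset.inter_comm]
  have hN : 2 * Mopt.card ≤ 3 * M.card := by omega
  have hcast : (2 * Mopt.card : ℝ) ≤ 3 * M.card := by exact_mod_cast hN
  linarith
end

section
/- In an instance of the stable marriage problem with ties, let M be a stable matching and M_opt a maximum-cardinality stable matching. If the graph contains no dangerous path with respect to M, then every component of M ⊕ M_opt which is an augmenting path for M has length at least 5, and consequently |M_opt| ≤ (3/2)·|M|. -/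
/-- An instance of the stable marriage problem with ties: a bipartite
acceptability relation between men `U` and women `W`, together with preference
lists given by rank functions (a smaller rank means a more preferred partner;
equal ranks encode ties, i.e. indifference). -/
structure SMI (U W : Type*) where
  acc : U → W → Prop
  mrank : U → W → ℕ
  wrank : W → U → ℕ

namespace SMI

variable {U W : Type*}

/-- A matching: a set of mutually acceptable pairs in which every man and
every woman appears at most once. -/
def IsMatching (I : SMI U W) (M : Finset (U × W)) : Prop :=
  (∀ p ∈ M, I.acc p.1 p.2) ∧
  (∀ p ∈ M, ∀ q ∈ M, p.1 = q.1 → p = q) ∧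
  (∀ p ∈ M, ∀ q ∈ M, p.2 = q.2 → p = q)

/-- Man `m` is unmatched (free) in `M`. -/
def ManUnmatched (M : Finset (U × W)) (m : U) : Prop := ∀ w, (m, w) ∉ M

/-- Woman `w` is unmatched (free) in `M`. -/
def WomanUnmatched (M : Finset (U × W)) (w : W) : Prop := ∀ m, (m, w) ∉ M

/-- `(m, w)` is a blocking pair for `M`: they are mutually acceptable, not
matched to each other, `m` is unmatched or strictly prefers `w` to his partner,
and `w` is unmatched or strictly prefers `m` to her partner. -/
def Blocking (I : SMI U W) (M : Finset (U × W)) (m : U) (w : W) : Prop :=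
  I.acc m w ∧ (m, w) ∉ M ∧
  (∀ w', (m, w') ∈ M → I.mrank m w < I.mrank m w') ∧
  (∀ m', (m', w) ∈ M → I.wrank w m < I.wrank w m')

/-- `M` is a stable matching: a matching admitting no blocking pair. -/
def Stable (I : SMI U W) (M : Finset (U × W)) : Prop :=
  I.IsMatching M ∧ ∀ m w, ¬ I.Blocking M m w

/-- A dangerous path `(w, m₁, w₁, m)` with respect to `M`: an alternating path
with `(m₁, w₁) ∈ M`, the edges `(m₁, w)` and `(m, w₁)` present but not in `M`,
`w` and `m` unmatched in `M`, such that `(m₁, w₁)` is not a blocking pair for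
the matching `M' = {(m₁, w), (m, w₁)}`. -/
def DangerousPath [DecidableEq U] [DecidableEq W] (I : SMI U W) (M : Finset (U × W))
    (w : W) (m₁ : U) (w₁ : W) (m : U) : Prop :=
  I.acc m₁ w ∧ I.acc m w₁ ∧ (m₁, w₁) ∈ M ∧ (m₁, w) ∉ M ∧ (m, w₁) ∉ M ∧
  WomanUnmatched M w ∧ ManUnmatched M m ∧
  ¬ I.Blocking ({(m₁, w), (m, w₁)} : Finset (U × W)) m₁ w₁

end SMI


section Aux
variable {U W : Type*} [DecidableEq U] [DecidableEq W]

omit [DecidableEq U] [DecidableEq W] in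
lemma bothFree_aux (I : SMI U W) (M Mopt : Finset (U × W))
    (hM : I.Stable M) (hMopt : I.Stable Mopt)
    {m : U} {w : W} (h : (m, w) ∈ Mopt)
    (hm : SMI.ManUnmatched M m) (hw : SMI.WomanUnmatched M w) : False :=
  hM.2 m w ⟨hMopt.1.1 _ h, hm w,
    fun w' hw' => absurd hw' (hm w'), fun m' hm' => absurd hm' (hw m')⟩

lemma core_aux (I : SMI U W) (M Mopt : Finset (U × W))
    (hM : I.Stable M) (hMopt : I.Stable Mopt)
    (hnd : ∀ (w : W) (m₁ : U) (w₁ : W) (m : U), ¬ I.DangerousPath M w m₁ w₁ m)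
    {m₁ m : U} {w w₁ : W}
    (h1 : (m₁, w₁) ∈ M) (h2 : (m₁, w) ∈ Mopt) (h3 : (m, w₁) ∈ Mopt)
    (hw : SMI.WomanUnmatched M w) (hm : SMI.ManUnmatched M m) : False := by
  have hb : I.Blocking ({(m₁, w), (m, w₁)} : Finset (U × W)) m₁ w₁ := by
    by_contra hnb
    exact hnd w m₁ w₁ m ⟨hMopt.1.1 _ h2, hMopt.1.1 _ h3, h1, hw m₁, hm w₁, hw, hm, hnb⟩
  have r1 : I.mrank m₁ w₁ < I.mrank m₁ w := hb.2.2.1 w (by simp)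
  have r2 : I.wrank w₁ m₁ < I.wrank w₁ m := hb.2.2.2 m (by simp)
  apply hMopt.2 m₁ w₁
  refine ⟨hM.1.1 _ h1, ?_, ?_, ?_⟩
  · intro hmem
    have heq := hMopt.1.2.1 _ hmem _ h2 rfl
    have hww : w₁ = w := congrArg Prod.snd heq
    rw [hww] at r1
    exact lt_irrefl _ r1
  · intro w' hw'
    have heq := hMopt.1.2.1 _ hw' _ h2 rfl
    have hww : w' = w := congrArg Prod.snd heq
    rwa [hww]
  · intro m' hm'
    have heq := hMopt.1.2.2 _ hm' _ h3 rfl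
    have hmm : m' = m := congrArg Prod.fst heq
    rwa [hmm]
end Aux

/-- if `M` is a stable matching, `Mopt` a maximum-cardinality
stable matching, and there is no dangerous path with respect to `M`, then every
component of `M ∆ Mopt` which is an augmenting path for `M` (here described
explicitly: women `ws 0, …, ws j`, men `ms 0, …, ms j`, `Mopt`-edges
`(ms i, ws i)`, `M`-edges `(ms i, ws (i+1))`, endpoints `ws 0` and `ms j`
unmatched in `M`) has length `2j+1 ≥ 5`, and consequently
`|Mopt| ≤ (3/2)·|M|`. -/
theorem no_dangerous_path_implies_augmenting_paths_long_and_three_halves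
    {U W : Type*} [DecidableEq U] [DecidableEq W] [Fintype U] [Fintype W]
    (I : SMI U W) (M Mopt : Finset (U × W))
    (hM : I.Stable M) (hMopt : I.Stable Mopt)
    (hmax : ∀ N : Finset (U × W), I.Stable N → N.card ≤ Mopt.card)
    (hnd : ∀ (w : W) (m₁ : U) (w₁ : W) (m : U), ¬ I.DangerousPath M w m₁ w₁ m) :
    (∀ (j : ℕ) (ws : Fin (j + 1) → W) (ms : Fin (j + 1) → U),
      Function.Injective ws → Function.Injective ms →
      (∀ i, (ms i, ws i) ∈ Mopt \ M) →
      (∀ i : Fin j, (ms i.castSucc, ws i.succ) ∈ M \ Mopt) →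
      SMI.WomanUnmatched M (ws 0) → SMI.ManUnmatched M (ms (Fin.last j)) →
      5 ≤ 2 * j + 1) ∧
    (Mopt.card : ℝ) ≤ 3 / 2 * M.card := by
  classical
  constructor
  · intro j ws ms hiw him hopt hMed hw0 hlast
    by_contra hcon
    have hj : j = 0 ∨ j = 1 := by omega
    rcases hj with rfl | rfl
    · have h0 := (Finset.mem_sdiff.1 (hopt 0)).1
      have hlast' : SMI.ManUnmatched M (ms 0) := by
        have : (Fin.last 0) = (0 : Fin 1) := by decide
        rwa [this] at hlast
      exact bothFree_aux I M Mopt hM hMopt h0 hlast' hw0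
    · have e1 := (Finset.mem_sdiff.1 (hopt 0)).1
      have e2 := (Finset.mem_sdiff.1 (hopt 1)).1
      have e3 := (Finset.mem_sdiff.1 (hMed 0)).1
      have hc0 : (Fin.castSucc (0 : Fin 1)) = (0 : Fin 2) := by decide
      have hs0 : (Fin.succ (0 : Fin 1)) = (1 : Fin 2) := by decide
      rw [hc0, hs0] at e3
      have hlast' : SMI.ManUnmatched M (ms 1) := by
        have : (Fin.last 1) = (1 : Fin 2) := by decide
        rwa [this] at hlast
      exact core_aux I M Mopt hM hMopt hnd e3 e1 e2 hw0 hlast'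
  · -- counting part
    set A := Mopt.filter (fun p => ∃ w', (p.1, w') ∈ M) with hAdef
    set B := Mopt.filter (fun p => ∃ m', (m', p.2) ∈ M) with hBdef
    set Q : U × W → Prop := fun p => (∃ w', (p.1, w') ∈ M) ∧ (∃ m', (m', p.2) ∈ M) with hQdef
    set T := Mopt.filter (fun p => ¬ Q p) with hTdef
    -- every Mopt edge has a matched endpoint
    have hor : ∀ p ∈ Mopt, (∃ w', (p.1, w') ∈ M) ∨ (∃ m', (m', p.2) ∈ M) := by
      intro p hp
      by_contra hc
      push_neg at hc
      exact bothFree_aux I M Mopt hM hMopt (show (p.1, p.2) ∈ Mopt by simpa using hp)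
        (fun w' => hc.1 w') (fun m' => hc.2 m')
    have hcardA : A.card ≤ M.card := by
      have key : ∀ p ∈ A, ∃ q ∈ M, q.1 = p.1 := by
        intro p hp
        obtain ⟨w', hw'⟩ := (Finset.mem_filter.1 hp).2
        exact ⟨(p.1, w'), hw', rfl⟩
      set f : U × W → U × W := fun p => if h : ∃ q ∈ M, q.1 = p.1 then h.choose else p with hf
      have hfM : ∀ p ∈ A, f p ∈ M := by
        intro p hp
        simp only [hf, dif_pos (key p hp)]
        exact (key p hp).choose_spec.1
      have hf1 : ∀ p ∈ A, (f p).1 = p.1 := by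
        intro p hp
        simp only [hf, dif_pos (key p hp)]
        exact (key p hp).choose_spec.2
      apply Finset.card_le_card_of_injOn f hfM
      intro p hp p' hp' heq
      have h11 : p.1 = p'.1 := by rw [← hf1 p hp, ← hf1 p' hp', heq]
      exact hMopt.1.2.1 p (Finset.filter_subset _ _ hp) p' (Finset.filter_subset _ _ hp') h11
    have hcardB : B.card ≤ M.card := by
      have key : ∀ p ∈ B, ∃ q ∈ M, q.2 = p.2 := by
        intro p hp
        obtain ⟨m', hm'⟩ := (Finset.mem_filter.1 hp).2
        exact ⟨(m', p.2), hm', rfl⟩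
      set f : U × W → U × W := fun p => if h : ∃ q ∈ M, q.2 = p.2 then h.choose else p with hf
      have hfM : ∀ p ∈ B, f p ∈ M := by
        intro p hp
        simp only [hf, dif_pos (key p hp)]
        exact (key p hp).choose_spec.1
      have hf2 : ∀ p ∈ B, (f p).2 = p.2 := by
        intro p hp
        simp only [hf, dif_pos (key p hp)]
        exact (key p hp).choose_spec.2
      apply Finset.card_le_card_of_injOn f hfM
      intro p hp p' hp' heq
      have h22 : p.2 = p'.2 := by rw [← hf2 p hp, ← hf2 p' hp', heq]
      exact hMopt.1.2.2 p (Finset.filter_subset _ _ hp) p' (Finset.filter_subset _ _ hp') h22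
    have hcardT : T.card ≤ M.card := by
      set f : U × W → U × W := fun p =>
        if h : ∃ q ∈ M, q.2 = p.2 then h.choose
        else if h' : ∃ q ∈ M, q.1 = p.1 then h'.choose else p with hf
      -- basic facts about elements of T
      have hTfact : ∀ p ∈ T, p ∈ Mopt ∧ ¬ Q p := fun p hp => Finset.mem_filter.1 hp
      -- if the woman of p is matched, the man of p is free; and f p is the M-edge of the woman
      have case2 : ∀ p ∈ T, (∃ q ∈ M, q.2 = p.2) →
          f p ∈ M ∧ (f p).2 = p.2 ∧ SMI.ManUnmatched M p.1 := by
        intro p hp h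
        obtain ⟨hpM, hnQ⟩ := hTfact p hp
        have hE2 : ∃ m', (m', p.2) ∈ M := by
          obtain ⟨q, hq, hq2⟩ := h
          exact ⟨q.1, by rw [← hq2]; simpa using hq⟩
        have hE1 : ¬ ∃ w', (p.1, w') ∈ M := fun hE1 => hnQ ⟨hE1, hE2⟩
        refine ⟨?_, ?_, fun w' hw' => hE1 ⟨w', hw'⟩⟩
        · simp only [hf, dif_pos h]; exact h.choose_spec.1
        · simp only [hf, dif_pos h]; exact h.choose_spec.2
      have case1 : ∀ p ∈ T, ¬ (∃ q ∈ M, q.2 = p.2) →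
          f p ∈ M ∧ (f p).1 = p.1 ∧ SMI.WomanUnmatched M p.2 := by
        intro p hp h
        obtain ⟨hpM, hnQ⟩ := hTfact p hp
        have hwfree : SMI.WomanUnmatched M p.2 := by
          intro m' hm'
          exact h ⟨(m', p.2), hm', rfl⟩
        have h' : ∃ q ∈ M, q.1 = p.1 := by
          rcases hor p hpM with ⟨w', hw'⟩ | ⟨m', hm'⟩
          · exact ⟨(p.1, w'), hw', rfl⟩
          · exact absurd hm' (hwfree m')
        refine ⟨?_, ?_, hwfree⟩
        · simp only [hf, dif_neg h, dif_pos h']; exact h'.choose_spec.1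
        · simp only [hf, dif_neg h, dif_pos h']; exact h'.choose_spec.2
      have hfM : ∀ p ∈ T, f p ∈ M := by
        intro p hp
        by_cases h : ∃ q ∈ M, q.2 = p.2
        · exact (case2 p hp h).1
        · exact (case1 p hp h).1
      apply Finset.card_le_card_of_injOn f hfM
      intro p hp p' hp' heq
      by_cases h : ∃ q ∈ M, q.2 = p.2 <;> by_cases h' : ∃ q ∈ M, q.2 = p'.2
      · have h22 : p.2 = p'.2 := by
          rw [← (case2 p hp h).2.1, ← (case2 p' hp' h').2.1, heq]
        exact hMopt.1.2.2 p (Finset.filter_subset _ _ hp) p'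
          (Finset.filter_subset _ _ hp') h22
      · -- p: woman matched, man free; p': woman free, man matched
        exfalso
        have c2 := case2 p hp h
        have c1 := case1 p' hp' h'
        have hMedge : (p'.1, p.2) ∈ M := by
          have : f p = (p'.1, p.2) := by
            rw [heq]
            exact Prod.ext (c1.2.1) (by rw [← heq]; exact c2.2.1)
          rw [← this]; exact c2.1
        have hp2opt : (p.1, p.2) ∈ Mopt := by
          simpa using (hTfact p hp).1
        have hp'2opt : (p'.1, p'.2) ∈ Mopt := by
          simpa using (hTfact p' hp').1
        exact core_aux I M Mopt hM hMopt hnd hMedge hp'2opt hp2opt c1.2.2 c2.2.2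
      · -- symmetric
        exfalso
        have c1 := case1 p hp h
        have c2 := case2 p' hp' h'
        have hMedge : (p.1, p'.2) ∈ M := by
          have : f p' = (p.1, p'.2) := by
            rw [← heq]
            exact Prod.ext (c1.2.1) (by rw [heq]; exact c2.2.1)
          rw [← this]; exact c2.1
        have hp2opt : (p.1, p.2) ∈ Mopt := by
          simpa using (hTfact p hp).1
        have hp'2opt : (p'.1, p'.2) ∈ Mopt := by
          simpa using (hTfact p' hp').1
        exact core_aux I M Mopt hM hMopt hnd hMedge hp2opt hp'2opt c1.2.2 c2.2.2
      · have h11 : p.1 = p'.1 := by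
          rw [← (case1 p hp h).2.1, ← (case1 p' hp' h').2.1, heq]
        exact hMopt.1.2.1 p (Finset.filter_subset _ _ hp) p'
          (Finset.filter_subset _ _ hp') h11
    -- set identities
    have hUnion : A ∪ B = Mopt := by
      apply Finset.Subset.antisymm
      · exact Finset.union_subset (Finset.filter_subset _ _) (Finset.filter_subset _ _)
      · intro p hp
        rcases hor p hp with h | h
        · exact Finset.mem_union_left _ (Finset.mem_filter.2 ⟨hp, h⟩)
        · exact Finset.mem_union_right _ (Finset.mem_filter.2 ⟨hp, h⟩)
    have hInter : A ∩ B = Mopt.filter Q := (Finset.filter_and _ _ _).symm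
    have hsplit : (Mopt.filter Q).card + T.card = Mopt.card :=
      Finset.card_filter_add_card_filter_not _
    have hcui : (A ∪ B).card + (A ∩ B).card = A.card + B.card :=
      Finset.card_union_add_card_inter A B
    have hnat : 2 * Mopt.card ≤ 3 * M.card := by
      have h1 : (A ∪ B).card = Mopt.card := by rw [hUnion]
      have h2 : (A ∩ B).card = (Mopt.filter Q).card := by rw [hInter]
      omega
    have hreal : (2 * Mopt.card : ℝ) ≤ 3 * M.card := by exact_mod_cast hnat
    linarith
end

section
/- Let M be a stable matching in a stable marriage instance with ties such that there is no dangerous path with respect to M. Then for every maximum stable matching M_opt, |M_opt| ≤ (3/2)·|M|, i.e., M is a 3/2-approximation of the optimum. -/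
/-- if `M` is a stable matching admitting no dangerous path, then
for every maximum stable matching `Mopt` we have `|Mopt| ≤ (3/2)·|M|`. -/
theorem stable_no_dangerous_path_is_three_halves_approximation
    {U W : Type*} [DecidableEq U] [DecidableEq W] [Fintype U] [Fintype W]
    (I : SMI U W) (M : Finset (U × W)) (hM : I.Stable M)
    (hnd : ∀ (w : W) (m₁ : U) (w₁ : W) (m : U), ¬ I.DangerousPath M w m₁ w₁ m) :
    ∀ Mopt : Finset (U × W), I.Stable Mopt →
      (∀ N : Finset (U × W), I.Stable N → N.card ≤ Mopt.card) →
      (Mopt.card : ℝ) ≤ 3 / 2 * M.card := by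
  classical
  intro Mopt hOpt _hmax
  obtain ⟨⟨haccM, hM1, hM2⟩, hMstab⟩ := hM
  obtain ⟨⟨haccO, hO1, hO2⟩, hOstab⟩ := hOpt
  -- weights
  set A : U × W → ℕ := fun p => if SMI.WomanUnmatched M p.2 then 2 else 1 with hA
  set B : U × W → ℕ := fun p => if SMI.ManUnmatched M p.1 then 2 else 1 with hB
  set F : (U × W) → (U × W) → ℕ := fun e p =>
    (if e.1 = p.1 then A p else 0) + (if e.2 = p.2 then B p else 0) with hF
  have key : 2 * Mopt.card ≤ 3 * M.card := by
    -- Step 1: each Mopt edge distributes total weight 2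
    have step1 : ∀ p ∈ Mopt, ∑ e ∈ M, F e p = 2 := by
      intro p hp
      have hsplit : ∑ e ∈ M, F e p =
          (∑ e ∈ M, if e.1 = p.1 then A p else 0) +
          (∑ e ∈ M, if e.2 = p.2 then B p else 0) := Finset.sum_add_distrib
      have h1 : (∑ e ∈ M, if e.1 = p.1 then A p else 0)
          = (M.filter (fun e => e.1 = p.1)).card * A p := by
        rw [← Finset.sum_filter, Finset.sum_const, smul_eq_mul]
      have h2 : (∑ e ∈ M, if e.2 = p.2 then B p else 0)
          = (M.filter (fun e => e.2 = p.2)).card * B p := by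
        rw [← Finset.sum_filter, Finset.sum_const, smul_eq_mul]
      have hc1 : (M.filter (fun e => e.1 = p.1)).card ≤ 1 := by
        apply Finset.card_le_one.mpr
        intro a ha b hb
        simp only [Finset.mem_filter] at ha hb
        exact hM1 a ha.1 b hb.1 (ha.2.trans hb.2.symm)
      have hc2 : (M.filter (fun e => e.2 = p.2)).card ≤ 1 := by
        apply Finset.card_le_one.mpr
        intro a ha b hb
        simp only [Finset.mem_filter] at ha hb
        exact hM2 a ha.1 b hb.1 (ha.2.trans hb.2.symm)
      by_cases hmu : SMI.ManUnmatched M p.1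
      · by_cases hwu : SMI.WomanUnmatched M p.2
        · -- both unmatched: (p.1,p.2) blocks M, contradiction
          exact absurd (show I.Blocking M p.1 p.2 from
            ⟨haccO p hp, hmu p.2, fun w' hw' => absurd hw' (hmu w'),
              fun m' hm' => absurd hm' (hwu m')⟩) (hMstab p.1 p.2)
        · -- p.1 unmatched, p.2 matched
          have he1 : (M.filter (fun e => e.1 = p.1)) = ∅ := by
            apply Finset.filter_eq_empty_iff.mpr
            intro e he hee
            exact hmu e.2 (by rwa [← hee, Prod.mk.eta])
          obtain ⟨m', hm'⟩ := not_forall.mp hwu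
          have hm'' : (m', p.2) ∈ M := not_not.mp hm'
          have he2 : (M.filter (fun e => e.2 = p.2)).card = 1 := by
            refine le_antisymm hc2 ?_
            exact Finset.card_pos.mpr ⟨(m', p.2), Finset.mem_filter.mpr ⟨hm'', rfl⟩⟩
          rw [hsplit, h1, h2, he1, he2, hB]
          simp [hmu]
      · -- p.1 matched
        obtain ⟨w', hw'⟩ := not_forall.mp hmu
        have hw'' : (p.1, w') ∈ M := not_not.mp hw'
        have he1 : (M.filter (fun e => e.1 = p.1)).card = 1 := by
          refine le_antisymm hc1 ?_
          exact Finset.card_pos.mpr ⟨(p.1, w'), Finset.mem_filter.mpr ⟨hw'', rfl⟩⟩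
        by_cases hwu : SMI.WomanUnmatched M p.2
        · have he2 : (M.filter (fun e => e.2 = p.2)) = ∅ := by
            apply Finset.filter_eq_empty_iff.mpr
            intro e he hee
            exact hwu e.1 (by rwa [← hee, Prod.mk.eta])
          rw [hsplit, h1, h2, he1, he2, hA]
          simp [hwu]
        · obtain ⟨m', hm'⟩ := not_forall.mp hwu
          have hm'' : (m', p.2) ∈ M := not_not.mp hm'
          have he2 : (M.filter (fun e => e.2 = p.2)).card = 1 := by
            refine le_antisymm hc2 ?_
            exact Finset.card_pos.mpr ⟨(m', p.2), Finset.mem_filter.mpr ⟨hm'', rfl⟩⟩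
          rw [hsplit, h1, h2, he1, he2, hA, hB]
          simp [hmu, hwu]
    -- Step 2: each M edge receives at most 3
    have step2 : ∀ e ∈ M, ∑ p ∈ Mopt, F e p ≤ 3 := by
      intro e he
      have hsplit : ∑ p ∈ Mopt, F e p =
          (∑ p ∈ Mopt, if e.1 = p.1 then A p else 0) +
          (∑ p ∈ Mopt, if e.2 = p.2 then B p else 0) := Finset.sum_add_distrib
      set S1 := ∑ p ∈ Mopt, if e.1 = p.1 then A p else 0 with hS1
      set S2 := ∑ p ∈ Mopt, if e.2 = p.2 then B p else 0 with hS2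
      have hc1 : (Mopt.filter (fun p => e.1 = p.1)).card ≤ 1 := by
        apply Finset.card_le_one.mpr
        intro a ha b hb
        simp only [Finset.mem_filter] at ha hb
        exact hO1 a ha.1 b hb.1 (ha.2.symm.trans hb.2)
      have hc2 : (Mopt.filter (fun p => e.2 = p.2)).card ≤ 1 := by
        apply Finset.card_le_one.mpr
        intro a ha b hb
        simp only [Finset.mem_filter] at ha hb
        exact hO2 a ha.1 b hb.1 (ha.2.symm.trans hb.2)
      have hd1 : S1 = 0 ∨ ∃ p₀ ∈ Mopt, p₀.1 = e.1 ∧ S1 = A p₀ := by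
        rw [hS1, ← Finset.sum_filter]
        rcases Finset.eq_empty_or_nonempty (Mopt.filter (fun p => e.1 = p.1)) with h | ⟨a, ha⟩
        · left; rw [h]; simp
        · right
          have hsing : Mopt.filter (fun p => e.1 = p.1) = {a} := by
            apply Finset.eq_singleton_iff_unique_mem.mpr
            refine ⟨ha, fun b hb => Finset.card_le_one.mp hc1 b hb a ha⟩
          simp only [Finset.mem_filter] at ha
          exact ⟨a, ha.1, ha.2.symm, by rw [hsing, Finset.sum_singleton]⟩
      have hd2 : S2 = 0 ∨ ∃ q₀ ∈ Mopt, q₀.2 = e.2 ∧ S2 = B q₀ := by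
        rw [hS2, ← Finset.sum_filter]
        rcases Finset.eq_empty_or_nonempty (Mopt.filter (fun p => e.2 = p.2)) with h | ⟨a, ha⟩
        · left; rw [h]; simp
        · right
          have hsing : Mopt.filter (fun p => e.2 = p.2) = {a} := by
            apply Finset.eq_singleton_iff_unique_mem.mpr
            refine ⟨ha, fun b hb => Finset.card_le_one.mp hc2 b hb a ha⟩
          simp only [Finset.mem_filter] at ha
          exact ⟨a, ha.1, ha.2.symm, by rw [hsing, Finset.sum_singleton]⟩
      have hA2 : ∀ p, A p ≤ 2 := by intro p; rw [hA]; dsimp only; split <;> omega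
      have hB2 : ∀ p, B p ≤ 2 := by intro p; rw [hB]; dsimp only; split <;> omega
      have hle1 : S1 ≤ 2 := by
        rcases hd1 with h | ⟨p₀, _, _, h⟩
        · omega
        · rw [h]; exact hA2 p₀
      have hle2 : S2 ≤ 2 := by
        rcases hd2 with h | ⟨q₀, _, _, h⟩
        · omega
        · rw [h]; exact hB2 q₀
      -- not both equal to 2
      have hkey : ¬ (2 ≤ S1 ∧ 2 ≤ S2) := by
        rintro ⟨hg1, hg2⟩
        rcases hd1 with h | ⟨p₀, hp₀, hp₀1, hS1e⟩
        · omega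
        rcases hd2 with h | ⟨q₀, hq₀, hq₀2, hS2e⟩
        · omega
        have hwu : SMI.WomanUnmatched M p₀.2 := by
          by_contra hh
          rw [hS1e, hA] at hg1; simp [hh] at hg1
        have hmu : SMI.ManUnmatched M q₀.1 := by
          by_contra hh
          rw [hS2e, hB] at hg2; simp [hh] at hg2
        -- dangerous path (p₀.2, e.1, e.2, q₀.1)
        have heM : (e.1, e.2) ∈ M := by rwa [Prod.mk.eta]
        have hacc1 : I.acc e.1 p₀.2 := by
          have := haccO p₀ hp₀; rwa [hp₀1] at this
        have hacc2 : I.acc q₀.1 e.2 := by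
          have := haccO q₀ hq₀; rwa [hq₀2] at this
        have hbl : I.Blocking ({(e.1, p₀.2), (q₀.1, e.2)} : Finset (U × W)) e.1 e.2 := by
          by_contra hb
          exact hnd p₀.2 e.1 e.2 q₀.1
            ⟨hacc1, hacc2, heM, hwu e.1, hmu e.2, hwu, hmu, hb⟩
        obtain ⟨hbacc, _, hbm, hbw⟩ := hbl
        refine hOstab e.1 e.2 ⟨hbacc, ?_, ?_, ?_⟩
        · intro hmem
          have hpeq : p₀ = (e.1, e.2) := hO1 p₀ hp₀ (e.1, e.2) hmem hp₀1
          have : p₀.2 = e.2 := by rw [hpeq]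
          exact hwu e.1 (by rwa [this])
        · intro w' hw'
          have hpeq : p₀ = (e.1, w') := hO1 p₀ hp₀ (e.1, w') hw' hp₀1
          have hw'eq : w' = p₀.2 := by rw [hpeq]
          rw [hw'eq]
          exact hbm p₀.2 (Finset.mem_insert_self _ _)
        · intro m' hm'
          have hqeq : q₀ = (m', e.2) := hO2 q₀ hq₀ (m', e.2) hm' hq₀2
          have hm'eq : m' = q₀.1 := by rw [hqeq]
          rw [hm'eq]
          exact hbw q₀.1 (Finset.mem_insert.mpr (Or.inr (Finset.mem_singleton_self _)))
      rw [hsplit]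
      omega
    calc 2 * Mopt.card = ∑ p ∈ Mopt, 2 := by rw [Finset.sum_const, smul_eq_mul, mul_comm]
      _ = ∑ p ∈ Mopt, ∑ e ∈ M, F e p := (Finset.sum_congr rfl step1).symm
      _ = ∑ e ∈ M, ∑ p ∈ Mopt, F e p := Finset.sum_comm
      _ ≤ ∑ e ∈ M, 3 := Finset.sum_le_sum step2
      _ = 3 * M.card := by rw [Finset.sum_const, smul_eq_mul, mul_comm]
  have key' : (2 : ℝ) * Mopt.card ≤ 3 * M.card := by exact_mod_cast key
  linarith
end

section
/- Let M and M_opt be matchings in a bipartite graph such that M is maximal and M ⊕ M_opt contains no connected component that is a path with exactly one M-edge and two M_opt-edges. Then |M_opt| ≤ (3/2)·|M|. -/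
open scoped symmDiff

/-- let `M`, `Mopt` be matchings in a bipartite graph with `M`
maximal, such that `M ∆ Mopt` has no connected component that is a path with
exactly one `M`-edge and two `Mopt`-edges (i.e. no component consisting of the
path `a - b - c - d` with `s(a,b), s(c,d) ∈ Mopt \ M`, `s(b,c) ∈ M \ Mopt`, and
no further edge of `M ∆ Mopt` at the endpoints `a` and `d`).  Then
`|Mopt| ≤ (3/2)·|M|`. -/
theorem maximal_no_short_augmenting_component_three_halves
    {V : Type*} [Fintype V] [DecidableEq V] (G : SimpleGraph V)
    (hbip : G.Colorable 2)
    (M Mopt : Finset (Sym2 V)) (hM : IsMatchingIn G M) (hMopt : IsMatchingIn G Mopt)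
    (hmaximal : ∀ e ∈ G.edgeSet, ∃ f ∈ M, ∃ v : V, v ∈ e ∧ v ∈ f)
    (h : ¬ ∃ a b c d : V, a ≠ b ∧ a ≠ c ∧ a ≠ d ∧ b ≠ c ∧ b ≠ d ∧ c ≠ d ∧
      s(a, b) ∈ Mopt \ M ∧ s(b, c) ∈ M \ Mopt ∧ s(c, d) ∈ Mopt \ M ∧
      (∀ e ∈ M ∆ Mopt, (a ∈ e → e = s(a, b)) ∧ (d ∈ e → e = s(c, d)))) :
    (Mopt.card : ℝ) ≤ 3 / 2 * M.card := by
  classical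
  rcases Finset.eq_empty_or_nonempty Mopt with rfl | ⟨e0, he0⟩
  · simp only [Finset.card_empty, Nat.cast_zero]
    positivity
  haveI : Nonempty V := ⟨e0.out.1⟩
  haveI : Nonempty (Sym2 V) := ⟨e0⟩
  obtain ⟨hMsub, hMdisj⟩ := hM
  obtain ⟨hOsub, hOdisj⟩ := hMopt
  -- two edges of a matching sharing a vertex are equal
  have uniqM : ∀ e ∈ M, ∀ e' ∈ M, ∀ v : V, v ∈ e → v ∈ e' → e = e' := by
    intro e he e' he' v hv hv'
    by_contra hne
    exact hMdisj e he e' he' hne v hv hv'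
  have uniqO : ∀ e ∈ Mopt, ∀ e' ∈ Mopt, ∀ v : V, v ∈ e → v ∈ e' → e = e' := by
    intro e he e' he' v hv hv'
    by_contra hne
    exact hOdisj e he e' he' hne v hv hv'
  -- the charging map φ : Mopt → M, with common vertex cv
  have hmax' : ∀ e ∈ Mopt, ∃ (f : Sym2 V) (v : V), f ∈ M ∧ v ∈ e ∧ v ∈ f := by
    intro e he
    obtain ⟨f, hf, v, hv1, hv2⟩ := hmaximal e (hOsub he)
    exact ⟨f, v, hf, hv1, hv2⟩
  choose! φ cv hφM hcv1 hcv2 using hmax'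
  -- a 2-element vertex superset of each edge
  have hvset : ∀ f : Sym2 V, ∃ s : Finset V, s.card ≤ 2 ∧ ∀ x, x ∈ f → x ∈ s := by
    intro f
    induction f using Sym2.ind with
    | _ x y =>
      refine ⟨{x, y}, ?_, ?_⟩
      · exact (Finset.card_insert_le _ _).trans (by simp)
      · intro z hz
        rw [Sym2.mem_iff] at hz
        rcases hz with rfl | rfl <;> simp
  choose vset hvset_card hvset_mem using hvset
  -- D : the doubly-charged edges of M
  set D : Finset (Sym2 V) :=
    M.filter (fun f => 2 ≤ (Mopt.filter (fun e => φ e = f)).card) with hDdef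
  -- key extraction: each doubly-charged edge yields a fresh M-edge at an endpoint
  have key : ∀ f ∈ D, ∃ (v : V) (g ef : Sym2 V),
      g ∈ M ∧ g ∉ Mopt ∧ v ∈ g ∧ v ∉ f ∧ ef ∈ Mopt ∧ v ∈ ef ∧ φ ef = f := by
    intro f hfD
    rw [hDdef, Finset.mem_filter] at hfD
    obtain ⟨hfM, hfib2⟩ := hfD
    obtain ⟨e1, he1, e2, he2, hne⟩ := Finset.one_lt_card.mp hfib2
    rw [Finset.mem_filter] at he1 he2
    obtain ⟨he1O, hφ1⟩ := he1
    obtain ⟨he2O, hφ2⟩ := he2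
    have hb1 : cv e1 ∈ e1 := hcv1 e1 he1O
    have hbf : cv e1 ∈ f := hφ1 ▸ hcv2 e1 he1O
    have hc2 : cv e2 ∈ e2 := hcv1 e2 he2O
    have hcf : cv e2 ∈ f := hφ2 ▸ hcv2 e2 he2O
    set b := cv e1
    set c := cv e2
    have hbc : b ≠ c := fun hbceq => hne (uniqO e1 he1O e2 he2O b hb1 (hbceq ▸ hc2))
    have hf_eq : f = s(b, c) := (Sym2.mem_and_mem_iff hbc).mp ⟨hbf, hcf⟩
    have hnd1 : ¬ e1.IsDiag := G.not_isDiag_of_mem_edgeSet (hOsub he1O)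
    have hnd2 : ¬ e2.IsDiag := G.not_isDiag_of_mem_edgeSet (hOsub he2O)
    set a := Sym2.Mem.other hb1 with ha_def
    set d := Sym2.Mem.other hc2 with hd_def
    have he1_eq : e1 = s(a, b) := by
      rw [← Sym2.other_spec hb1, Sym2.eq_swap]
    have he2_eq : e2 = s(c, d) := by rw [← Sym2.other_spec hc2]
    have hab : a ≠ b := Sym2.other_ne hnd1 hb1
    have hcd : c ≠ d := (Sym2.other_ne hnd2 hc2).symm
    have ha1 : a ∈ e1 := Sym2.other_mem hb1
    have hd2 : d ∈ e2 := Sym2.other_mem hc2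
    have hac : a ≠ c := fun hq => hne (uniqO e1 he1O e2 he2O a ha1 (hq ▸ hc2))
    have had : a ≠ d := fun hq => hne (uniqO e1 he1O e2 he2O a ha1 (hq ▸ hd2))
    have hbd : b ≠ d := fun hq => hne (uniqO e1 he1O e2 he2O b hb1 (hq ▸ hd2))
    have he1M : e1 ∉ M := by
      intro hmem
      have h1f : e1 = f := uniqM e1 hmem f hfM b hb1 hbf
      have : c ∈ e1 := h1f ▸ hcf
      exact hne (uniqO e1 he1O e2 he2O c this hc2)
    have he2M : e2 ∉ M := by
      intro hmem
      have h2f : e2 = f := uniqM e2 hmem f hfM c hc2 hcf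
      have : b ∈ e2 := h2f ▸ hbf
      exact hne (uniqO e1 he1O e2 he2O b hb1 this)
    have hfO : f ∉ Mopt := by
      intro hmem
      have : f = e1 := uniqO f hmem e1 he1O b hbf hb1
      exact he1M (this ▸ hfM)
    -- invoke the no-short-augmenting-path hypothesis
    have hnall : ¬ ∀ e ∈ M ∆ Mopt, (a ∈ e → e = s(a, b)) ∧ (d ∈ e → e = s(c, d)) := by
      intro hall
      refine h ⟨a, b, c, d, hab, hac, had, hbc, hbd, hcd, ?_, ?_, ?_, hall⟩
      · rw [← he1_eq]; exact Finset.mem_sdiff.mpr ⟨he1O, he1M⟩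
      · rw [← hf_eq]; exact Finset.mem_sdiff.mpr ⟨hfM, hfO⟩
      · rw [← he2_eq]; exact Finset.mem_sdiff.mpr ⟨he2O, he2M⟩
    push_neg at hnall
    obtain ⟨e, heMem, hbad⟩ := hnall
    have heMem' : e ∈ M ∧ e ∉ Mopt ∨ e ∈ Mopt ∧ e ∉ M := Finset.mem_symmDiff.mp heMem
    have hcases : (a ∈ e ∧ e ≠ s(a, b)) ∨ (d ∈ e ∧ e ≠ s(c, d)) := by
      by_cases himp : a ∈ e → e = s(a, b)
      · exact Or.inr (hbad himp)
      · exact Or.inl (_root_.not_imp.mp himp)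
    rcases hcases with hA | hB
    · obtain ⟨hae, hne'⟩ := hA
      have heM : e ∈ M ∧ e ∉ Mopt := by
        rcases heMem' with h' | h'
        · exact h'
        · exfalso
          have : e = e1 := uniqO e h'.1 e1 he1O a hae ha1
          exact hne' (this.trans he1_eq)
      have hanf : a ∉ f := by
        rw [hf_eq, Sym2.mem_iff]
        push_neg
        exact ⟨hab, hac⟩
      exact ⟨a, e, e1, heM.1, heM.2, hae, hanf, he1O, ha1, hφ1⟩
    · obtain ⟨hde, hne'⟩ := hB
      have heM : e ∈ M ∧ e ∉ Mopt := by
        rcases heMem' with h' | h'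
        · exact h'
        · exfalso
          have : e = e2 := uniqO e h'.1 e2 he2O d hde hd2
          exact hne' (this.trans he2_eq)
      have hdnf : d ∉ f := by
        rw [hf_eq, Sym2.mem_iff]
        push_neg
        exact ⟨hbd.symm, hcd.symm⟩
      exact ⟨d, e, e2, heM.1, heM.2, hde, hdnf, he2O, hd2, hφ2⟩
  choose! vF gF eF hgM hgO hvg hvnf hefO hvef hφef using key
  -- the per-edge bound: total charge (direct + deflected) at each edge is ≤ 2
  have keybound : ∀ f : Sym2 V,
      (Mopt.filter (fun e => φ e = f)).card
        + (D.filter (fun f' => gF f' = f)).card ≤ 2 := by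
    intro f
    set A := (Mopt.filter (fun e => φ e = f)).image cv with hA
    set B := (D.filter (fun f' => gF f' = f)).image vF with hB
    have hinjA : Set.InjOn cv ↑(Mopt.filter (fun e => φ e = f)) := by
      intro x hx y hy hxy
      rw [Finset.mem_coe, Finset.mem_filter] at hx hy
      exact uniqO x hx.1 y hy.1 (cv y) (hxy ▸ hcv1 x hx.1) (hcv1 y hy.1)
    have hinjB : Set.InjOn vF ↑(D.filter (fun f' => gF f' = f)) := by
      intro x hx y hy hxy
      rw [Finset.mem_coe, Finset.mem_filter] at hx hy
      have hex : eF x = eF y :=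
        uniqO (eF x) (hefO x hx.1) (eF y) (hefO y hy.1) (vF y)
          (hxy ▸ hvef x hx.1) (hvef y hy.1)
      rw [← hφef x hx.1, ← hφef y hy.1, hex]
    have hdisj : Disjoint A B := by
      rw [Finset.disjoint_left]
      intro x hxA hxB
      rw [hA, Finset.mem_image] at hxA
      rw [hB, Finset.mem_image] at hxB
      obtain ⟨e, he, hecv⟩ := hxA
      obtain ⟨f', hf', hfv⟩ := hxB
      rw [Finset.mem_filter] at he hf'
      have hee : e = eF f' :=
        uniqO e he.1 (eF f') (hefO f' hf'.1) x (hecv ▸ hcv1 e he.1)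
          (hfv ▸ hvef f' hf'.1)
      have hff : f = f' := by
        rw [← he.2, hee, hφef f' hf'.1]
      have hvf : vF f' ∈ f' := by
        have := hvg f' hf'.1
        rw [hf'.2, hff] at this
        exact this
      exact hvnf f' hf'.1 hvf
    have hsub : A ∪ B ⊆ vset f := by
      intro x hx
      rcases Finset.mem_union.mp hx with hx | hx
      · rw [hA, Finset.mem_image] at hx
        obtain ⟨e, he, hecv⟩ := hx
        rw [Finset.mem_filter] at he
        exact hvset_mem f x (by rw [← he.2]; exact hecv ▸ hcv2 e he.1)
      · rw [hB, Finset.mem_image] at hx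
        obtain ⟨f', hf', hfv⟩ := hx
        rw [Finset.mem_filter] at hf'
        exact hvset_mem f x (by rw [← hf'.2]; exact hfv ▸ hvg f' hf'.1)
    calc (Mopt.filter (fun e => φ e = f)).card
          + (D.filter (fun f' => gF f' = f)).card
        = A.card + B.card := by
          rw [hA, hB, Finset.card_image_of_injOn hinjA, Finset.card_image_of_injOn hinjB]
      _ = (A ∪ B).card := (Finset.card_union_of_disjoint hdisj).symm
      _ ≤ (vset f).card := Finset.card_le_card hsub
      _ ≤ 2 := hvset_card f
  -- fiberwise counting
  have hsum1 : Mopt.card = ∑ f ∈ M, (Mopt.filter (fun e => φ e = f)).card :=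
    Finset.card_eq_sum_card_fiberwise (fun e he => hφM e he)
  have hsum2 : D.card = ∑ f ∈ M, (D.filter (fun f' => gF f' = f)).card :=
    Finset.card_eq_sum_card_fiberwise (fun f' hf' =>
      hgM f' hf')
  -- inequality (B): |Mopt| + |D| ≤ 2 |M|
  have hineqB : Mopt.card + D.card ≤ 2 * M.card := by
    calc Mopt.card + D.card
        = ∑ f ∈ M, ((Mopt.filter (fun e => φ e = f)).card
            + (D.filter (fun f' => gF f' = f)).card) := by
          rw [Finset.sum_add_distrib, ← hsum1, ← hsum2]
      _ ≤ ∑ _f ∈ M, 2 := Finset.sum_le_sum (fun f _ => keybound f)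
      _ = 2 * M.card := by rw [Finset.sum_const, smul_eq_mul, mul_comm]
  -- inequality (A): |Mopt| ≤ |M| + |D|
  have fib_le : ∀ f : Sym2 V, (Mopt.filter (fun e => φ e = f)).card ≤ 2 :=
    fun f => le_trans (Nat.le_add_right _ _) (keybound f)
  have hineqA : Mopt.card ≤ M.card + D.card := by
    have hDcard : D.card
        = ∑ f ∈ M, (if 2 ≤ (Mopt.filter (fun e => φ e = f)).card then 1 else 0) := by
      rw [hDdef, Finset.card_filter]
    rw [hsum1, hDcard]
    have hb : ∀ f ∈ M, (Mopt.filter (fun e => φ e = f)).card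
        ≤ 1 + (if 2 ≤ (Mopt.filter (fun e => φ e = f)).card then 1 else 0) := by
      intro f _
      have := fib_le f
      split <;> omega
    calc ∑ f ∈ M, (Mopt.filter (fun e => φ e = f)).card
        ≤ ∑ f ∈ M, (1 + (if 2 ≤ (Mopt.filter (fun e => φ e = f)).card then 1 else 0)) :=
          Finset.sum_le_sum hb
      _ = M.card + ∑ f ∈ M, (if 2 ≤ (Mopt.filter (fun e => φ e = f)).card then 1 else 0) := by
          rw [Finset.sum_add_distrib, Finset.sum_const, smul_eq_mul, mul_one]
  -- combine
  have hfinal : 2 * Mopt.card ≤ 3 * M.card := by omega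
  have := (Nat.cast_le (α := ℝ)).mpr hfinal
  push_cast at this
  linarith
end

section
/- Let M be a stable b-matching in a many-to-many matching instance with ties, and let P = (w, u₁, w₁, u) be a dangerous path with respect to M. Then either w and w₁ are equally good for u₁ (masculine dangerous path), or u and u₁ are equally good for w₁ (feminine dangerous path). -/
/-- A many-to-many stable `b`-matching instance: a bipartite acceptability
relation between `U`-agents and `W`-agents, capacities `bU`, `bW`, and
preference lists given by rank functions (smaller rank = more preferred;
equal ranks encode ties). -/
structure BMI (U W : Type*) where
  acc : U → W → Prop
  bU : U → ℕ
  bW : W → ℕ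
  urank : U → W → ℕ
  wrank : W → U → ℕ

namespace BMI

variable {U W : Type*} [DecidableEq U] [DecidableEq W]

/-- The degree of a `U`-agent `u` in `M`. -/
def degU (M : Finset (U × W)) (u : U) : ℕ := (M.filter (fun p => p.1 = u)).card

/-- The degree of a `W`-agent `w` in `M`. -/
def degW (M : Finset (U × W)) (w : W) : ℕ := (M.filter (fun p => p.2 = w)).card

/-- `M` is a `b`-matching: a set of mutually acceptable pairs respecting all
capacities. -/
def IsBMatching (I : BMI U W) (M : Finset (U × W)) : Prop :=
  (∀ p ∈ M, I.acc p.1 p.2) ∧ (∀ u, degU M u ≤ I.bU u) ∧ (∀ w, degW M w ≤ I.bW w)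

/-- `u` is saturated in `M`. -/
def SatU (I : BMI U W) (M : Finset (U × W)) (u : U) : Prop := degU M u = I.bU u

/-- `w` is saturated in `M`. -/
def SatW (I : BMI U W) (M : Finset (U × W)) (w : W) : Prop := degW M w = I.bW w

/-- `(u, w)` is a blocking pair for `M`: an acceptable pair not in `M` such
that `u` is unsaturated or strictly prefers `w` to some member of `M(u)`, and
`w` is unsaturated or strictly prefers `u` to some member of `M(w)`. -/
def Blocking (I : BMI U W) (M : Finset (U × W)) (u : U) (w : W) : Prop :=
  I.acc u w ∧ (u, w) ∉ M ∧
  (degU M u < I.bU u ∨ ∃ w', (u, w') ∈ M ∧ I.urank u w < I.urank u w') ∧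
  (degW M w < I.bW w ∨ ∃ u', (u', w) ∈ M ∧ I.wrank w u < I.wrank w u')

/-- `M` is a stable `b`-matching. -/
def Stable (I : BMI U W) (M : Finset (U × W)) : Prop :=
  I.IsBMatching M ∧ ∀ u w, ¬ I.Blocking M u w

end BMI

/-- A dangerous path `(w, u₁, w₁, u)` with respect to a stable `b`-matching
`M`: `(u₁, w₁) ∈ M`, the acceptable pairs `(u₁, w)`, `(u, w₁)` are not in `M`,
`w` and `u` are unsaturated, `u₁` and `w₁` are saturated, and `(u₁, w₁)` is not
a blocking pair for `M' = (M \ {(u₁, w₁)}) ∪ {(u₁, w), (u, w₁)}`. -/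
def BMI.DangerousPath {U W : Type*} [DecidableEq U] [DecidableEq W]
    (I : BMI U W) (M : Finset (U × W)) (w : W) (u₁ : U) (w₁ : W) (u : U) : Prop :=
  I.acc u₁ w ∧ I.acc u w₁ ∧ (u₁, w₁) ∈ M ∧ (u₁, w) ∉ M ∧ (u, w₁) ∉ M ∧
  BMI.degW M w < I.bW w ∧ BMI.degU M u < I.bU u ∧
  I.SatU M u₁ ∧ I.SatW M w₁ ∧
  ¬ I.Blocking (insert (u₁, w) (insert (u, w₁) (M.erase (u₁, w₁)))) u₁ w₁

/-- a dangerous path `(w, u₁, w₁, u)` with respect to a stable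
`b`-matching `M` is masculine (`w` and `w₁` are equally good for `u₁`) or
feminine (`u` and `u₁` are equally good for `w₁`). -/
theorem bmatching_dangerous_path_masculine_or_feminine
    {U W : Type*} [DecidableEq U] [DecidableEq W]
    (I : BMI U W) (M : Finset (U × W)) (hM : I.Stable M)
    (w : W) (u₁ : U) (w₁ : W) (u : U) (hd : I.DangerousPath M w u₁ w₁ u) :
    I.urank u₁ w = I.urank u₁ w₁ ∨ I.wrank w₁ u = I.wrank w₁ u₁ := by
  obtain ⟨hacc1, hacc2, hmem, hnm1, hnm2, hwuns, huuns, hsatu1, hsatw1, hnb⟩ := hd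
  obtain ⟨⟨haccM, hbu, hbw⟩, hstab⟩ := hM
  have hune : u ≠ u₁ := by
    intro h; subst h; exact absurd hsatu1 (ne_of_lt huuns)
  have hwne : w ≠ w₁ := by
    intro h; subst h; exact absurd hsatw1 (ne_of_lt hwuns)
  set M' : Finset (U × W) := insert (u₁, w) (insert (u, w₁) (M.erase (u₁, w₁))) with hM'
  -- from stability of M
  have h1 : I.urank u₁ w₁ ≤ I.urank u₁ w := by
    by_contra h
    exact hstab u₁ w ⟨hacc1, hnm1, Or.inr ⟨w₁, hmem, not_le.mp h⟩, Or.inl hwuns⟩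
  have h2 : I.wrank w₁ u₁ ≤ I.wrank w₁ u := by
    by_contra h
    exact hstab u w₁ ⟨hacc2, hnm2, Or.inl huuns, Or.inr ⟨u₁, hmem, not_le.mp h⟩⟩
  have hnm' : (u₁, w₁) ∉ M' := by
    simp only [hM', Finset.mem_insert, Finset.mem_erase, Prod.mk.injEq]
    push_neg
    exact ⟨fun _ => hwne.symm, fun h => absurd h.symm hune, fun h => absurd rfl h⟩
  have hmemw : (u₁, w) ∈ M' := Finset.mem_insert_self _ _
  have hmemu : (u, w₁) ∈ M' := Finset.mem_insert_of_mem (Finset.mem_insert_self _ _)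
  -- degree computations
  have hfilter : ∀ p ∈ M.filter (fun p : U × W => p.1 = u₁), True := fun _ _ => trivial
  have hcardU : BMI.degU M' u₁ = BMI.degU M u₁ := by
    unfold BMI.degU
    rw [hM', Finset.filter_insert, Finset.filter_insert, Finset.filter_erase]
    simp only [if_neg hune, eq_self_iff_true, if_true]
    rw [Finset.card_insert_of_notMem (by
      simp only [Finset.mem_erase, Finset.mem_filter, Prod.mk.injEq, not_and]
      intro _ h; exact absurd h hnm1)]
    rw [Finset.card_erase_of_mem (by simp [hmem])]
    have hpos : 0 < (M.filter (fun p : U × W => p.1 = u₁)).card :=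
      Finset.card_pos.mpr ⟨(u₁, w₁), by simp [hmem]⟩
    omega
  have hcardW : BMI.degW M' w₁ = BMI.degW M w₁ := by
    unfold BMI.degW
    rw [hM', Finset.filter_insert, Finset.filter_insert, Finset.filter_erase]
    simp only [if_neg hwne, eq_self_iff_true, if_true]
    rw [Finset.card_insert_of_notMem (by
      simp only [Finset.mem_erase, Finset.mem_filter, Prod.mk.injEq, not_and]
      intro _ h; exact absurd h hnm2)]
    rw [Finset.card_erase_of_mem (by simp [hmem])]
    have hpos : 0 < (M.filter (fun p : U × W => p.2 = w₁)).card :=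
      Finset.card_pos.mpr ⟨(u₁, w₁), by simp [hmem]⟩
    omega
  -- use non-blocking in M'
  have hnb' : ¬ ((BMI.degU M' u₁ < I.bU u₁ ∨ ∃ w', (u₁, w') ∈ M' ∧ I.urank u₁ w₁ < I.urank u₁ w') ∧
      (BMI.degW M' w₁ < I.bW w₁ ∨ ∃ u', (u', w₁) ∈ M' ∧ I.wrank w₁ u₁ < I.wrank w₁ u')) :=
    fun ⟨hc, hd⟩ => hnb ⟨haccM _ hmem, hnm', hc, hd⟩
  rcases not_and_or.mp hnb' with hC | hD
  · push_neg at hC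
    left
    exact le_antisymm (hC.2 w hmemw) h1
  · push_neg at hD
    right
    exact le_antisymm (hD.2 u hmemu) h2
end

section
/- In a stable marriage instance with ties where ties appear only in the preference lists of one side (say only women have ties), any stable matching M with no feminine dangerous path satisfies |M_opt| ≤ (3/2)|M| for every matching M_opt that is stable, provided also no masculine dangerous path exists; moreover since men's lists are strict, no masculine dangerous path can exist, so it suffices that M has no feminine dangerous path. -/
/-- A masculine dangerous path `(w, m₁, w₁, m)` with respect to `M`:
an alternating path with `(m₁, w₁) ∈ M`, `w` and `m` unmatched, where `m₁` is
indifferent between `w` and `w₁`. -/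
def SMI.MasculineDP {U W : Type*} (I : SMI U W) (M : Finset (U × W))
    (w : W) (m₁ : U) (w₁ : W) (m : U) : Prop :=
  I.acc m₁ w ∧ I.acc m w₁ ∧ (m₁, w₁) ∈ M ∧ (m₁, w) ∉ M ∧ (m, w₁) ∉ M ∧
  SMI.WomanUnmatched M w ∧ SMI.ManUnmatched M m ∧ I.mrank m₁ w = I.mrank m₁ w₁

/-- A feminine dangerous path `(w, m₁, w₁, m)` with respect to `M`:
an alternating path with `(m₁, w₁) ∈ M`, `w` and `m` unmatched, where `w₁` is
indifferent between `m` and `m₁`. -/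
def SMI.FeminineDP {U W : Type*} (I : SMI U W) (M : Finset (U × W))
    (w : W) (m₁ : U) (w₁ : W) (m : U) : Prop :=
  I.acc m₁ w ∧ I.acc m w₁ ∧ (m₁, w₁) ∈ M ∧ (m₁, w) ∉ M ∧ (m, w₁) ∉ M ∧
  SMI.WomanUnmatched M w ∧ SMI.ManUnmatched M m ∧ I.wrank w₁ m = I.wrank w₁ m₁


section Aux

open SMI

variable {U W : Type*}

open scoped Classical in
/-- Charge function: send an `Mopt`-edge to the `M`-edge at its man if the man
is matched in `M`, otherwise to the `M`-edge at its woman. -/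
noncomputable def smiPhi (M : Finset (U × W)) (e : U × W) : U × W :=
  if h : ∃ f ∈ M, f.1 = e.1 then h.choose
  else if h' : ∃ f ∈ M, f.2 = e.2 then h'.choose
  else e

open scoped Classical in
/-- Map a doubly-hit `M`-edge `f` to the `M`-edge at the woman who is the
`Mopt`-partner of `f`'s man. -/
noncomputable def smiPsi (M Mopt : Finset (U × W)) (f : U × W) : U × W :=
  if h : ∃ e ∈ Mopt, e.1 = f.1 then
    (if h' : ∃ g ∈ M, g.2 = h.choose.2 then h'.choose else f)
  else f

/-- The key configuration lemma: a length-3 augmenting path yields a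
contradiction. -/
lemma smi_key (I : SMI U W)
    (hstrictM : ∀ m w w', I.acc m w → I.acc m w' → I.mrank m w = I.mrank m w' → w = w')
    {M Mopt : Finset (U × W)} (hM : I.Stable M) (hMopt : I.Stable Mopt)
    (hnf : ∀ (w : W) (m₁ : U) (w₁ : W) (m : U), ¬ I.FeminineDP M w m₁ w₁ m)
    {m₁ : U} {w w₁ : W} {m : U}
    (hf : (m₁, w₁) ∈ M) (he₁ : (m₁, w) ∈ Mopt) (he₂ : (m, w₁) ∈ Mopt)
    (hm : ManUnmatched M m) (hw : WomanUnmatched M w) : False := by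
  obtain ⟨⟨haccM, huM, hwM⟩, hstab⟩ := hM
  obtain ⟨⟨haccO, huO, hwO⟩, hstabO⟩ := hMopt
  have hmne : m ≠ m₁ := by
    intro h; subst h; exact hm w₁ hf
  have hwne : w ≠ w₁ := by
    intro h; subst h
    have := hwO _ he₁ _ he₂ rfl
    exact hmne (congrArg Prod.fst this).symm
  have haccm₁w : I.acc m₁ w := haccO _ he₁
  have haccmw₁ : I.acc m w₁ := haccO _ he₂
  have haccm₁w₁ : I.acc m₁ w₁ := haccM _ hf
  -- stability of M at (m₁, w)
  have h1 : I.mrank m₁ w₁ ≤ I.mrank m₁ w := by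
    by_contra hlt
    push_neg at hlt
    refine hstab m₁ w ⟨haccm₁w, hw m₁, ?_, fun m' hm' => absurd hm' (hw m')⟩
    intro w' hw'
    have : ((m₁, w') : U × W) = (m₁, w₁) := huM _ hw' _ hf rfl
    have : w' = w₁ := congrArg Prod.snd this
    subst this; exact hlt
  -- stability of M at (m, w₁)
  have h2 : I.wrank w₁ m₁ ≤ I.wrank w₁ m := by
    by_contra hlt
    push_neg at hlt
    refine hstab m w₁ ⟨haccmw₁, hm w₁, fun w' hw' => absurd hw' (hm w'), ?_⟩
    intro m' hm'
    have : ((m', w₁) : U × W) = (m₁, w₁) := hwM _ hm' _ hf rfl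
    have : m' = m₁ := congrArg Prod.fst this
    subst this; exact hlt
  -- strict men's lists give strict inequality
  have h1' : I.mrank m₁ w₁ < I.mrank m₁ w := by
    rcases lt_or_eq_of_le h1 with h | h
    · exact h
    · exact absurd (hstrictM m₁ w w₁ haccm₁w haccm₁w₁ h.symm) hwne
  -- no feminine dangerous path gives strict inequality
  have h2' : I.wrank w₁ m₁ < I.wrank w₁ m := by
    rcases lt_or_eq_of_le h2 with h | h
    · exact h
    · exact absurd ⟨haccm₁w, haccmw₁, hf, hw m₁, hm w₁, hw, hm, h.symm⟩
        (hnf w m₁ w₁ m)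
  -- (m₁, w₁) blocks Mopt
  refine hstabO m₁ w₁ ⟨haccm₁w₁, ?_, ?_, ?_⟩
  · intro hmem
    have : ((m₁, w₁) : U × W) = (m₁, w) := huO _ hmem _ he₁ rfl
    exact hwne ((congrArg Prod.snd this).symm)
  · intro w' hw'
    have : ((m₁, w') : U × W) = (m₁, w) := huO _ hw' _ he₁ rfl
    have : w' = w := congrArg Prod.snd this
    subst this; exact h1'
  · intro m' hm'
    have : ((m', w₁) : U × W) = (m, w₁) := hwO _ hm' _ he₂ rfl
    have : m' = m := congrArg Prod.fst this
    subst this; exact h2'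

end Aux

/-- in an instance with one-sided ties (men's lists are strict),
a stable matching `M` with no feminine dangerous path admits no masculine
dangerous path either (strict men's lists forbid them), and satisfies
`|Mopt| ≤ (3/2)·|M|` for every stable matching `Mopt`. -/
theorem one_sided_ties_no_feminine_dangerous_path_three_halves
    {U W : Type*} [DecidableEq U] [DecidableEq W] [Fintype U] [Fintype W]
    (I : SMI U W)
    (hstrictM : ∀ m w w', I.acc m w → I.acc m w' → I.mrank m w = I.mrank m w' → w = w')
    (M : Finset (U × W)) (hM : I.Stable M)
    (hnf : ∀ (w : W) (m₁ : U) (w₁ : W) (m : U), ¬ I.FeminineDP M w m₁ w₁ m) :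
    (∀ (w : W) (m₁ : U) (w₁ : W) (m : U), ¬ I.MasculineDP M w m₁ w₁ m) ∧
    ∀ Mopt : Finset (U × W), I.Stable Mopt → (Mopt.card : ℝ) ≤ 3 / 2 * M.card := by
  classical
  obtain ⟨⟨haccM, huM, hwM⟩, hstab⟩ := hM
  have hMfull : I.Stable M := ⟨⟨haccM, huM, hwM⟩, hstab⟩
  constructor
  · rintro w m₁ w₁ m ⟨h1, h2, h3, h4, h5, h6, h7, h8⟩
    have : w = w₁ := hstrictM m₁ w w₁ h1 (haccM _ h3) h8
    subst this
    exact h4 h3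
  · intro Mopt hMoptFull
    obtain ⟨⟨haccO, huO, hwO⟩, hstabO⟩ := hMoptFull
    have hMoptFull' : I.Stable Mopt := ⟨⟨haccO, huO, hwO⟩, hstabO⟩
    -- no Mopt edge has both endpoints unmatched in M
    have hnb : ∀ e ∈ Mopt, (¬ ∃ f ∈ M, f.1 = e.1) → ∃ f ∈ M, f.2 = e.2 := by
      intro e he hman
      by_contra hwom
      push_neg at hwom
      refine hstab e.1 e.2 ⟨haccO _ he, ?_, ?_, ?_⟩
      · intro hmem
        exact hman ⟨(e.1, e.2), hmem, rfl⟩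
      · intro w' hw'
        exact absurd ⟨(e.1, w'), hw', rfl⟩ hman
      · intro m' hm'
        exact absurd rfl (hwom (m', e.2) hm')
    -- phi maps Mopt into M, with classification
    have hphi : ∀ e ∈ Mopt, smiPhi M e ∈ M ∧
        (((smiPhi M e).1 = e.1) ∨ ((¬ ∃ f ∈ M, f.1 = e.1) ∧ (smiPhi M e).2 = e.2)) := by
      intro e he
      unfold smiPhi
      split_ifs with h h'
      · exact ⟨h.choose_spec.1, Or.inl h.choose_spec.2⟩
      · exact ⟨h'.choose_spec.1, Or.inr ⟨h, h'.choose_spec.2⟩⟩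
      · exact absurd (hnb e he h) h'
    have hphimem : ∀ e ∈ Mopt, smiPhi M e ∈ M := fun e he => (hphi e he).1
    set fib : U × W → Finset (U × W) := fun f => Mopt.filter (fun e => smiPhi M e = f)
      with hfib
    -- classification of fiber elements
    have hclass : ∀ f, ∀ e ∈ fib f,
        (e.1 = f.1) ∨ ((∀ w', (e.1, w') ∉ M) ∧ e.2 = f.2) := by
      intro f e he
      rw [hfib, Finset.mem_filter] at he
      obtain ⟨heO, heq⟩ := he
      rcases (hphi e heO).2 with h | ⟨h, h2⟩
      · exact Or.inl (h.symm.trans (congrArg Prod.fst heq))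
      · refine Or.inr ⟨?_, h2.symm.trans (congrArg Prod.snd heq)⟩
        intro w' hw'
        exact h ⟨(e.1, w'), hw', rfl⟩
    -- each fiber has at most 2 elements
    have hfib2 : ∀ f, (fib f).card ≤ 2 := by
      intro f
      have hsub : fib f ⊆ Mopt.filter (fun e => e.1 = f.1) ∪
          Mopt.filter (fun e => e.2 = f.2) := by
        intro e he
        have heO : e ∈ Mopt := Finset.mem_filter.mp he |>.1
        rcases hclass f e he with h | ⟨_, h⟩
        · exact Finset.mem_union_left _ (Finset.mem_filter.mpr ⟨heO, h⟩)
        · exact Finset.mem_union_right _ (Finset.mem_filter.mpr ⟨heO, h⟩)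
      calc (fib f).card ≤ _ := Finset.card_le_card hsub
        _ ≤ (Mopt.filter (fun e => e.1 = f.1)).card +
            (Mopt.filter (fun e => e.2 = f.2)).card := Finset.card_union_le _ _
        _ ≤ 1 + 1 := by
            gcongr
            · refine Finset.card_le_one.mpr ?_
              intro a ha b hb
              rw [Finset.mem_filter] at ha hb
              exact huO _ ha.1 _ hb.1 (ha.2.trans hb.2.symm)
            · refine Finset.card_le_one.mpr ?_
              intro a ha b hb
              rw [Finset.mem_filter] at ha hb
              exact hwO _ ha.1 _ hb.1 (ha.2.trans hb.2.symm)
    set D : Finset (U × W) := M.filter (fun f => 2 ≤ (fib f).card) with hD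
    set D' : Finset (U × W) := M.filter (fun f => ¬ 2 ≤ (fib f).card) with hD'
    -- structure of a doubly-hit edge
    have hDstruct : ∀ f ∈ D, ∃ e ∈ Mopt, e.1 = f.1 ∧
        ∃ e' ∈ Mopt, SMI.ManUnmatched M e'.1 ∧ e'.2 = f.2 := by
      intro f hfD
      rw [hD, Finset.mem_filter] at hfD
      obtain ⟨hfM, hcard⟩ := hfD
      obtain ⟨e₁, he₁, e₂, he₂, hne⟩ := Finset.one_lt_card.mp hcard
      have he₁O : e₁ ∈ Mopt := Finset.mem_filter.mp he₁ |>.1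
      have he₂O : e₂ ∈ Mopt := Finset.mem_filter.mp he₂ |>.1
      rcases hclass f e₁ he₁ with h1 | ⟨h1, h1'⟩ <;>
        rcases hclass f e₂ he₂ with h2 | ⟨h2, h2'⟩
      · exact absurd (huO _ he₁O _ he₂O (h1.trans h2.symm)) hne
      · exact ⟨e₁, he₁O, h1, e₂, he₂O, h2, h2'⟩
      · exact ⟨e₂, he₂O, h2, e₁, he₁O, h1, h1'⟩
      · exact absurd (hwO _ he₁O _ he₂O (h1'.trans h2'.symm)) hne
    -- psi properties on D
    have hpsi : ∀ f ∈ D, smiPsi M Mopt f ∈ M ∧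
        (∃ e ∈ Mopt, e.1 = f.1 ∧ (smiPsi M Mopt f).2 = e.2) := by
      intro f hfD
      obtain ⟨e, heO, hef, e', he'O, hmu', he'f⟩ := hDstruct f hfD
      have hfM : f ∈ M := (Finset.mem_filter.mp (hD ▸ hfD)).1
      have hex : ∃ x ∈ Mopt, x.1 = f.1 := ⟨e, heO, hef⟩
      unfold smiPsi
      rw [dif_pos hex]
      have hcs := hex.choose_spec
      have hcw : ∃ g ∈ M, g.2 = hex.choose.2 := by
        by_contra hno
        push_neg at hno
        -- dangerous-path contradiction: woman hex.choose.2 unmatched in M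
        have hwum : SMI.WomanUnmatched M hex.choose.2 := by
          intro m' hm'
          exact hno (m', hex.choose.2) hm' rfl
        have hfpair : (f.1, f.2) ∈ M := hfM
        have hc1 : (f.1, hex.choose.2) ∈ Mopt := by
          have : hex.choose = (f.1, hex.choose.2) := Prod.ext hcs.2 rfl
          exact this ▸ hcs.1
        have hc2 : (e'.1, f.2) ∈ Mopt := by
          have : e' = (e'.1, f.2) := Prod.ext rfl he'f
          exact this ▸ he'O
        exact smi_key I hstrictM hMfull hMoptFull' hnf hfpair hc1 hc2 hmu' hwum
      rw [dif_pos hcw]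
      exact ⟨hcw.choose_spec.1, hex.choose, hcs.1, hcs.2, hcw.choose_spec.2⟩
    -- psi maps D into D'
    have hpsiD' : ∀ f ∈ D, smiPsi M Mopt f ∈ D' := by
      intro f hfD
      obtain ⟨hgM, e, heO, hef, hg2⟩ := hpsi f hfD
      have hfM : f ∈ M := (Finset.mem_filter.mp (hD ▸ hfD)).1
      rw [hD', Finset.mem_filter]
      refine ⟨hgM, ?_⟩
      intro hcard
      -- the fiber of g := psi f has at most one element
      have hle1 : (fib (smiPsi M Mopt f)).card ≤ 1 := by
        refine Finset.card_le_one.mpr ?_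
        intro a ha b hb
        have haO : a ∈ Mopt := Finset.mem_filter.mp ha |>.1
        have hbO : b ∈ Mopt := Finset.mem_filter.mp hb |>.1
        have key : ∀ c, c ∈ fib (smiPsi M Mopt f) → c ∈ Mopt →
            c.1 = (smiPsi M Mopt f).1 := by
          intro c hc hcO
          rcases hclass _ c hc with h | ⟨h, h'⟩
          · exact h
          · exfalso
            -- c.2 = g.2 = e.2, so c = e, so c.1 = f.1 is matched in M
            have : c = e := hwO _ hcO _ heO (h'.trans hg2)
            have : c.1 = f.1 := this ▸ hef
            exact h f.2 (by rw [this]; exact hfM)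
        exact huO _ haO _ hbO ((key a ha haO).trans (key b hb hbO).symm)
      omega
    -- psi is injective on D
    have hpsiInj : ∀ f₁ ∈ D, ∀ f₂ ∈ D, smiPsi M Mopt f₁ = smiPsi M Mopt f₂ → f₁ = f₂ := by
      intro f₁ h₁ f₂ h₂ heq
      obtain ⟨_, e₁, he₁O, he₁f, hg₁⟩ := hpsi f₁ h₁
      obtain ⟨_, e₂, he₂O, he₂f, hg₂⟩ := hpsi f₂ h₂
      have hf₁M : f₁ ∈ M := (Finset.mem_filter.mp (hD ▸ h₁)).1
      have hf₂M : f₂ ∈ M := (Finset.mem_filter.mp (hD ▸ h₂)).1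
      have : e₁ = e₂ := hwO _ he₁O _ he₂O (hg₁.symm.trans (heq ▸ hg₂))
      exact huM _ hf₁M _ hf₂M (he₁f.symm.trans (this ▸ he₂f))
    have hcardDD' : D.card ≤ D'.card :=
      Finset.card_le_card_of_injOn (smiPsi M Mopt) hpsiD' hpsiInj
    -- counting
    have hsum : Mopt.card = ∑ f ∈ M, (fib f).card :=
      Finset.card_eq_sum_card_fiberwise hphimem
    have hsplit : ∑ f ∈ M, (fib f).card =
        ∑ f ∈ D, (fib f).card + ∑ f ∈ D', (fib f).card :=
      (Finset.sum_filter_add_sum_filter_not M _ _).symm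
    have hDsum : ∑ f ∈ D, (fib f).card ≤ 2 * D.card := by
      calc ∑ f ∈ D, (fib f).card ≤ ∑ _f ∈ D, 2 :=
            Finset.sum_le_sum (fun f _ => hfib2 f)
        _ = 2 * D.card := by rw [Finset.sum_const, smul_eq_mul, mul_comm]
    have hD'sum : ∑ f ∈ D', (fib f).card ≤ D'.card := by
      calc ∑ f ∈ D', (fib f).card ≤ ∑ _f ∈ D', 1 := by
            refine Finset.sum_le_sum ?_
            intro f hf
            have := (Finset.mem_filter.mp (hD' ▸ hf)).2
            omega
        _ = D'.card := by rw [Finset.sum_const, smul_eq_mul, mul_one]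
    have hMcard : M.card = D.card + D'.card :=
      (Finset.card_filter_add_card_filter_not (s := M)
        (p := fun f => 2 ≤ (fib f).card)).symm
    have hmain : 2 * Mopt.card ≤ 3 * M.card := by omega
    have := (Nat.cast_le (α := ℝ)).mpr hmain
    push_cast at this ⊢
    linarith
end

section
/- Let M, M_opt be matchings in a finite graph and k ≥ 1. If every connected component of M ⊕ M_opt that is an augmenting path for M has length at least 2k+1, then |M_opt| ≤ ((k+1)/k)·|M|. -/
open scoped symmDiff
open SimpleGraph Finset

/-- `v` is unmatched (free) in the matching `M`. -/
def UnmatchedIn {V : Type*} (M : Finset (Sym2 V)) (v : V) : Prop := ∀ e ∈ M, v ∉ e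




private lemma alt_countP {α : Type*} (p : α → Bool) :
    ∀ l : List α, l.Chain' (fun e f => p e = !p f) → l.length / 2 ≤ l.countP p
  | [] => by simp
  | [a] => by simp
  | a :: b :: t => by
    intro hc
    obtain ⟨h1, hc'⟩ := List.isChain_cons_cons.mp hc
    have ih := alt_countP p t hc'.tail
    have hcount : (a :: b :: t).countP p = t.countP p + 1 := by
      rw [List.countP_cons, List.countP_cons]
      cases hb : p b <;> rw [hb] at h1 <;> simp [h1, hb]
    have hlen : (a :: b :: t).length = t.length + 2 := by simp
    omega

private lemma walk_edges_chain' {V : Type*} {H : SimpleGraph V} :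
    ∀ {u v : V} (p : H.Walk u v), p.edges.Chain' (fun e f => ∃ x, x ∈ e ∧ x ∈ f)
  | _, _, Walk.nil => by simp [List.Chain']
  | _, _, Walk.cons h Walk.nil => by simp [List.Chain']
  | _, _, Walk.cons h (Walk.cons h' q) => by
    have ih := walk_edges_chain' (Walk.cons h' q)
    rw [Walk.edges_cons] at ih ⊢
    rw [Walk.edges_cons]
    simp only [List.Chain']
    rw [List.isChain_cons_cons]
    exact ⟨⟨_, Sym2.mem_mk_right _ _, Sym2.mem_mk_left _ _⟩, ih⟩



/-- let `M`, `Mopt` be matchings in a finite graph and `k ≥ 1`.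
If every connected component of `M ∆ Mopt` that is an augmenting path for `M`
(equivalently, every nontrivial path in the symmetric-difference graph between
two `M`-unmatched vertices) has length at least `2k+1`, then
`|Mopt| ≤ ((k+1)/k)·|M|`. -/
theorem long_augmenting_paths_ratio_bound
    {V : Type*} [Fintype V] [DecidableEq V] (G : SimpleGraph V)
    (M Mopt : Finset (Sym2 V)) (hM : IsMatchingIn G M) (hMopt : IsMatchingIn G Mopt)
    (k : ℕ) (hk : 1 ≤ k)
    (h : ∀ (u v : V)
      (p : (SimpleGraph.fromEdgeSet ((M ∆ Mopt : Finset (Sym2 V)) : Set (Sym2 V))).Walk u v),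
      p.IsPath → UnmatchedIn M u → UnmatchedIn M v → p.edges ≠ [] →
      2 * k + 1 ≤ p.length) :
    (Mopt.card : ℝ) ≤ (k + 1) / k * M.card := by
  classical
  obtain ⟨hMsub, hMdisj⟩ := hM
  obtain ⟨hOsub, hOdisj⟩ := hMopt
  set D : Finset (Sym2 V) := M ∆ Mopt with hDdef
  set H : SimpleGraph V := SimpleGraph.fromEdgeSet (↑D : Set (Sym2 V)) with hHdef
  have hDmem : ∀ e, e ∈ D ↔ (e ∈ M ∧ e ∉ Mopt) ∨ (e ∈ Mopt ∧ e ∉ M) := fun e =>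
    Finset.mem_symmDiff
  have hDG : ∀ e ∈ D, e ∈ G.edgeSet := by
    intro e he
    rcases (hDmem e).1 he with ⟨h1, _⟩ | ⟨h1, _⟩
    · exact hMsub h1
    · exact hOsub h1
  have hnd : ∀ e ∈ D, ¬ e.IsDiag := fun e he => G.not_isDiag_of_mem_edgeSet (hDG e he)
  have hHadj : ∀ u v : V, H.Adj u v → s(u, v) ∈ D := by
    intro u v huv
    rw [hHdef, SimpleGraph.fromEdgeSet_adj] at huv
    exact huv.1
  have hHedge : ∀ e ∈ H.edgeSet, e ∈ D := by
    intro e he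
    rw [hHdef, SimpleGraph.edgeSet_fromEdgeSet] at he
    exact he.1
  haveI : Fintype H.ConnectedComponent := Fintype.ofFinite _
  set comp : Sym2 V → H.ConnectedComponent := fun e => H.connectedComponentMk e.out.1
    with hcompdef
  have hcomp : ∀ e ∈ D, ∀ v ∈ e, H.connectedComponentMk v = comp e := by
    intro e he v hv
    by_cases hvx : v = e.out.1
    · rw [hvx]
    · have he2 : e = s(v, e.out.1) := (Sym2.mem_and_mem_iff hvx).mp ⟨hv, e.out_fst_mem⟩
      have hadj : H.Adj v e.out.1 := by
        rw [hHdef, SimpleGraph.fromEdgeSet_adj]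
        refine ⟨?_, hvx⟩
        rw [← he2]; exact_mod_cast he
      exact SimpleGraph.ConnectedComponent.sound hadj.reachable
  set AC : H.ConnectedComponent → Finset (Sym2 V) :=
    fun C => (Mopt \ M).filter (fun e => comp e = C) with hACdef
  set BC : H.ConnectedComponent → Finset (Sym2 V) :=
    fun C => (M \ Mopt).filter (fun e => comp e = C) with hBCdef
  have hAmem : ∀ C, ∀ e ∈ AC C, e ∈ Mopt ∧ e ∉ M ∧ e ∈ D ∧ comp e = C := by
    intro C e he
    obtain ⟨h1, h2⟩ := Finset.mem_filter.mp he
    obtain ⟨h3, h4⟩ := Finset.mem_sdiff.mp h1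
    exact ⟨h3, h4, (hDmem e).2 (Or.inr ⟨h3, h4⟩), h2⟩
  have hBmem : ∀ C, ∀ e ∈ BC C, e ∈ M ∧ e ∉ Mopt ∧ e ∈ D ∧ comp e = C := by
    intro C e he
    obtain ⟨h1, h2⟩ := Finset.mem_filter.mp he
    obtain ⟨h3, h4⟩ := Finset.mem_sdiff.mp h1
    exact ⟨h3, h4, (hDmem e).2 (Or.inl ⟨h3, h4⟩), h2⟩
  -- at most one edge of a matching at each vertex
  have atMostOne : ∀ (N : Finset (Sym2 V)),
      (∀ e ∈ N, ∀ f ∈ N, e ≠ f → ∀ v : V, v ∈ e → v ∉ f) →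
      ∀ (v : V) (F : Finset (Sym2 V)), F ⊆ N →
      (F.filter (fun e => v ∈ e)).card ≤ 1 := by
    intro N hN v F hF
    refine Finset.card_le_one.mpr ?_
    intro e he f hf
    obtain ⟨heF, hev⟩ := Finset.mem_filter.mp he
    obtain ⟨hfF, hfv⟩ := Finset.mem_filter.mp hf
    by_contra hne
    exact hN e (hF heF) f (hF hfF) hne v hev hfv
  -- double counting
  have hdouble : ∀ (C : H.ConnectedComponent) (F : Finset (Sym2 V)), F ⊆ D →
      (∀ e ∈ F, comp e = C) →
      (∑ v ∈ Finset.univ.filter (fun v => H.connectedComponentMk v = C),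
        (F.filter (fun e => v ∈ e)).card) = 2 * F.card := by
    intro C F hFD hFC
    have step1 : ∀ v : V, (F.filter (fun e => v ∈ e)).card
        = ∑ e ∈ F, if v ∈ e then 1 else 0 := fun v => Finset.card_filter _ _
    rw [Finset.sum_congr rfl (fun v _ => step1 v), Finset.sum_comm]
    have step2 : ∀ e ∈ F,
        (∑ v ∈ Finset.univ.filter (fun v => H.connectedComponentMk v = C),
          if v ∈ e then 1 else 0) = 2 := by
      intro e he
      rw [← Finset.card_filter]
      induction e using Sym2.ind with
      | _ a b =>
        have hD := hFD he
        have hab : a ≠ b := by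
          intro hcon
          exact hnd _ hD (by rw [hcon]; exact Sym2.mk_isDiag_iff.mpr rfl)
        have haS : H.connectedComponentMk a = C := by
          rw [hcomp _ hD a (Sym2.mem_mk_left a b)]; exact hFC _ he
        have hbS : H.connectedComponentMk b = C := by
          rw [hcomp _ hD b (Sym2.mem_mk_right a b)]; exact hFC _ he
        have : ((Finset.univ.filter (fun v => H.connectedComponentMk v = C)).filter
            (fun v => v ∈ s(a, b))) = {a, b} := by
          ext v
          simp only [Finset.mem_filter, Finset.mem_univ, true_and, Sym2.mem_iff,
            Finset.mem_insert, Finset.mem_singleton]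
          constructor
          · rintro ⟨_, h⟩; exact h
          · rintro (rfl | rfl)
            · exact ⟨haS, Or.inl rfl⟩
            · exact ⟨hbS, Or.inr rfl⟩
        rw [this, Finset.card_pair hab]
    rw [Finset.sum_congr rfl step2, Finset.sum_const, smul_eq_mul, mul_comm]

  have key : ∀ C, k * (AC C).card ≤ (k + 1) * (BC C).card := by
    intro C
    by_cases hle : (AC C).card ≤ (BC C).card
    · exact le_trans (Nat.mul_le_mul_left k hle) (Nat.mul_le_mul_right _ (Nat.le_succ k))
    push_neg at hle
    set E : Finset (Sym2 V) := AC C ∪ BC C with hEdef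
    have hdisj : Disjoint (AC C) (BC C) := by
      rw [Finset.disjoint_left]
      intro e heA heB
      exact (hAmem C e heA).2.1 (hBmem C e heB).1
    have hEcard : E.card = (AC C).card + (BC C).card := Finset.card_union_of_disjoint hdisj
    have hED : E ⊆ D := by
      intro e he
      rcases Finset.mem_union.mp he with h' | h'
      · exact (hAmem C e h').2.2.1
      · exact (hBmem C e h').2.2.1
    have hEC : ∀ e ∈ E, comp e = C := by
      intro e he
      rcases Finset.mem_union.mp he with h' | h'
      · exact (hAmem C e h').2.2.2
      · exact (hBmem C e h').2.2.2
    have hDE : ∀ e ∈ D, comp e = C → e ∈ E := by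
      intro e he hc
      rcases (hDmem e).1 he with ⟨h1, h2⟩ | ⟨h1, h2⟩
      · exact Finset.mem_union_right _
          (Finset.mem_filter.mpr ⟨Finset.mem_sdiff.mpr ⟨h1, h2⟩, hc⟩)
      · exact Finset.mem_union_left _
          (Finset.mem_filter.mpr ⟨Finset.mem_sdiff.mpr ⟨h1, h2⟩, hc⟩)
    have hsuma := hdouble C (AC C) (fun e he => (hAmem C e he).2.2.1)
      (fun e he => (hAmem C e he).2.2.2)
    have hsumb := hdouble C (BC C) (fun e he => (hBmem C e he).2.2.1)
      (fun e he => (hBmem C e he).2.2.2)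
    have hsumd := hdouble C E hED hEC
    set S : Finset V := Finset.univ.filter (fun v => H.connectedComponentMk v = C) with hSdef
    have hSC : ∀ v ∈ S, H.connectedComponentMk v = C := by
      intro v hv; exact (Finset.mem_filter.mp hv).2
    have hCS : ∀ v : V, H.connectedComponentMk v = C → v ∈ S := by
      intro v hv; exact Finset.mem_filter.mpr ⟨Finset.mem_univ v, hv⟩
    have haAt1 : ∀ v : V, ((AC C).filter (fun e => v ∈ e)).card ≤ 1 :=
      fun v => atMostOne Mopt hOdisj v _ (fun e he => (hAmem C e he).1)
    have hbAt1 : ∀ v : V, ((BC C).filter (fun e => v ∈ e)).card ≤ 1 :=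
      fun v => atMostOne M hMdisj v _ (fun e he => (hBmem C e he).1)
    have hdsplit : ∀ v : V, (E.filter (fun e => v ∈ e)).card
        = ((AC C).filter (fun e => v ∈ e)).card + ((BC C).filter (fun e => v ∈ e)).card := by
      intro v
      rw [hEdef, Finset.filter_union,
        Finset.card_union_of_disjoint (Finset.disjoint_filter_filter hdisj)]
    -- the component is nonempty
    obtain ⟨e0, he0⟩ := Finset.card_pos.mp (by omega : 0 < (AC C).card)
    have he0E : e0 ∈ E := Finset.mem_union_left _ he0
    have he0D : e0 ∈ D := (hAmem C e0 he0).2.2.1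
    have hrS : e0.out.1 ∈ S :=
      hCS _ (by rw [hcomp _ he0D _ e0.out_fst_mem]; exact (hAmem C e0 he0).2.2.2)
    -- every vertex of the component has degree at least 1
    have hdeg1 : ∀ v ∈ S, 1 ≤ (E.filter (fun e => v ∈ e)).card := by
      intro v hv
      by_contra h0
      push_neg at h0
      have hiso : ∀ w : V, ¬ H.Adj v w := by
        intro w hadj
        have hD' : s(v, w) ∈ D := hHadj v w hadj
        have hc' : comp s(v, w) = C := by
          rw [← hcomp _ hD' v (Sym2.mem_mk_left v w)]
          exact hSC v hv
        have hmem : s(v, w) ∈ E.filter (fun e => v ∈ e) :=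
          Finset.mem_filter.mpr ⟨hDE _ hD' hc', Sym2.mem_mk_left v w⟩
        have := Finset.card_pos.mpr ⟨_, hmem⟩
        omega
      have hvr : H.Reachable v e0.out.1 :=
        SimpleGraph.ConnectedComponent.exact ((hSC v hv).trans (hSC _ hrS).symm)
      by_cases hveq : v = e0.out.1
      · rw [hveq] at h0
        have hmem : e0 ∈ E.filter (fun e => e0.out.1 ∈ e) :=
          Finset.mem_filter.mpr ⟨he0E, e0.out_fst_mem⟩
        have := Finset.card_pos.mpr ⟨_, hmem⟩
        omega
      · obtain ⟨p⟩ := hvr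
        obtain ⟨w, hadj, q, hq⟩ := SimpleGraph.Walk.exists_eq_cons_of_ne hveq p
        exact hiso w hadj
    have hdeg2 : ∀ v : V, (E.filter (fun e => v ∈ e)).card ≤ 2 := by
      intro v
      have := haAt1 v; have := hbAt1 v
      rw [hdsplit v]; omega
    -- leaf counting:  2 * |E| + L = 2 * |S|
    have hptw : ∀ v ∈ S, (E.filter (fun e => v ∈ e)).card
        + (if (E.filter (fun e => v ∈ e)).card = 1 then 1 else 0) = 2 := by
      intro v hv
      have h1 := hdeg1 v hv
      have h2 := hdeg2 v
      split <;> omega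
    have hsum2 : (∑ v ∈ S, (E.filter (fun e => v ∈ e)).card)
        + (∑ v ∈ S, if (E.filter (fun e => v ∈ e)).card = 1 then 1 else 0) = 2 * S.card := by
      rw [← Finset.sum_add_distrib, Finset.sum_congr rfl hptw, Finset.sum_const,
        smul_eq_mul, mul_comm]
    have hLsum : (∑ v ∈ S, if (E.filter (fun e => v ∈ e)).card = 1 then 1 else 0)
        = (S.filter (fun v => (E.filter (fun e => v ∈ e)).card = 1)).card :=
      (Finset.card_filter _ _).symm
    -- |S| - 1 ≤ |E| via a BFS-style injection
    have hstep : ∀ v ∈ S, v ≠ e0.out.1 →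
        ∃ w, H.Adj v w ∧ H.dist e0.out.1 w < H.dist e0.out.1 v := by
      intro v hv hvr
      have hreach : H.Reachable e0.out.1 v :=
        SimpleGraph.ConnectedComponent.exact ((hSC _ hrS).trans (hSC v hv).symm)
      have hpos : 0 < H.dist e0.out.1 v := hreach.pos_dist_of_ne (fun hh => hvr hh.symm)
      obtain ⟨p, hp⟩ := hreach.exists_walk_length_eq_dist
      obtain ⟨w, hadj, q, hq⟩ := SimpleGraph.Walk.exists_eq_cons_of_ne hvr p.reverse
      refine ⟨w, hadj, ?_⟩
      have hlq := congrArg SimpleGraph.Walk.length hq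
      rw [SimpleGraph.Walk.length_reverse, hp, SimpleGraph.Walk.length_cons] at hlq
      have hdw : H.dist e0.out.1 w ≤ q.length := by
        rw [SimpleGraph.dist_comm]
        exact SimpleGraph.dist_le q
      omega
    have hcard_m : S.card - 1 ≤ E.card := by
      have hchoice : ∀ v : V, ∃ w : V, (v ∈ S ∧ v ≠ e0.out.1) →
          H.Adj v w ∧ H.dist e0.out.1 w < H.dist e0.out.1 v := by
        intro v
        by_cases hv : v ∈ S ∧ v ≠ e0.out.1
        · obtain ⟨w, hw⟩ := hstep v hv.1 hv.2
          exact ⟨w, fun _ => hw⟩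
        · exact ⟨v, fun hh => absurd hh hv⟩
      choose par hpar using hchoice
      have hmaps : ∀ v ∈ S.erase e0.out.1, s(v, par v) ∈ E := by
        intro v hv
        obtain ⟨hvr, hvS⟩ := Finset.mem_erase.mp hv
        have hadj := (hpar v ⟨hvS, hvr⟩).1
        have hD' : s(v, par v) ∈ D := hHadj _ _ hadj
        refine hDE _ hD' ?_
        rw [← hcomp _ hD' v (Sym2.mem_mk_left _ _)]
        exact hSC v hvS
      have hinj : Set.InjOn (fun v => s(v, par v)) (S.erase e0.out.1) := by
        intro v1 hv1 v2 hv2 heq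
        obtain ⟨h1r, h1S⟩ := Finset.mem_erase.mp (Finset.mem_coe.mp hv1)
        obtain ⟨h2r, h2S⟩ := Finset.mem_erase.mp (Finset.mem_coe.mp hv2)
        simp only [Sym2.eq_iff] at heq
        rcases heq with ⟨hv, -⟩ | ⟨hA, hB⟩
        · exact hv
        · exfalso
          have d1 := (hpar v1 ⟨h1S, h1r⟩).2
          have d2 := (hpar v2 ⟨h2S, h2r⟩).2
          rw [hB] at d1
          rw [← hA] at d2
          omega
      have hc := Finset.card_le_card_of_injOn _ hmaps hinj
      rwa [Finset.card_erase_of_mem hrS] at hc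
    -- matched-vertex counts
    have hsa : (S.filter (fun v => ((AC C).filter (fun e => v ∈ e)).card = 1)).card
        = 2 * (AC C).card := by
      rw [Finset.card_filter, ← hsuma]
      refine Finset.sum_congr rfl ?_
      intro v hv
      have := haAt1 v
      split <;> omega
    have hsb : (S.filter (fun v => ((BC C).filter (fun e => v ∈ e)).card = 1)).card
        = 2 * (BC C).card := by
      rw [Finset.card_filter, ← hsumb]
      refine Finset.sum_congr rfl ?_
      intro v hv
      have := hbAt1 v
      split <;> omega
    set SA : Finset V := S.filter (fun v => ((AC C).filter (fun e => v ∈ e)).card = 1)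
      with hSAdef
    set SB : Finset V := S.filter (fun v => ((BC C).filter (fun e => v ∈ e)).card = 1)
      with hSBdef
    set X : Finset V := SA \ SB with hXdef
    set Y : Finset V := SB \ SA with hYdef
    have hXz : X.card + (SA ∩ SB).card = SA.card := Finset.card_sdiff_add_card_inter SA SB
    have hYz : Y.card + (SA ∩ SB).card = SB.card := by
      rw [Finset.inter_comm]
      exact Finset.card_sdiff_add_card_inter SB SA
    have hXleaf : X ⊆ S.filter (fun v => (E.filter (fun e => v ∈ e)).card = 1) := by
      intro v hv
      obtain ⟨hvSA, hvnSB⟩ := Finset.mem_sdiff.mp hv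
      obtain ⟨hvS, hva⟩ := Finset.mem_filter.mp hvSA
      have hvb : ((BC C).filter (fun e => v ∈ e)).card = 0 := by
        have := hbAt1 v
        by_contra hb
        exact hvnSB (Finset.mem_filter.mpr ⟨hvS, by omega⟩)
      exact Finset.mem_filter.mpr ⟨hvS, by rw [hdsplit v]; omega⟩
    have hYleaf : Y ⊆ S.filter (fun v => (E.filter (fun e => v ∈ e)).card = 1) := by
      intro v hv
      obtain ⟨hvSB, hvnSA⟩ := Finset.mem_sdiff.mp hv
      obtain ⟨hvS, hvb⟩ := Finset.mem_filter.mp hvSB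
      have hva : ((AC C).filter (fun e => v ∈ e)).card = 0 := by
        have := haAt1 v
        by_contra hb
        exact hvnSA (Finset.mem_filter.mpr ⟨hvS, by omega⟩)
      exact Finset.mem_filter.mpr ⟨hvS, by rw [hdsplit v]; omega⟩
    have hXY : Disjoint X Y := disjoint_sdiff_sdiff
    have hXYL : X.card + Y.card
        ≤ (S.filter (fun v => (E.filter (fun e => v ∈ e)).card = 1)).card := by
      rw [← Finset.card_union_of_disjoint hXY]
      exact Finset.card_le_card (Finset.union_subset hXleaf hYleaf)
    have hAB : (AC C).card = (BC C).card + 1 := by omega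
    have hX2 : 1 < X.card := by omega
    -- vertices of X are unmatched in M
    have hXunm : ∀ w ∈ X, UnmatchedIn M w := by
      intro w hw
      obtain ⟨hwSA, hwnSB⟩ := Finset.mem_sdiff.mp hw
      obtain ⟨hwS, hwa⟩ := Finset.mem_filter.mp hwSA
      obtain ⟨eA, heA⟩ := Finset.card_pos.mp (by omega : 0 < ((AC C).filter (fun e => w ∈ e)).card)
      obtain ⟨heAAC, hweA⟩ := Finset.mem_filter.mp heA
      intro e heM hwe
      by_cases heO : e ∈ Mopt
      · have hne : eA ≠ e := fun hh => (hAmem C eA heAAC).2.1 (hh ▸ heM)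
        exact hOdisj eA (hAmem C eA heAAC).1 e heO hne w hweA hwe
      · have heD : e ∈ D := (hDmem e).2 (Or.inl ⟨heM, heO⟩)
        have hcE : e ∈ (BC C).filter (fun f => w ∈ f) := by
          refine Finset.mem_filter.mpr ⟨Finset.mem_filter.mpr
            ⟨Finset.mem_sdiff.mpr ⟨heM, heO⟩, ?_⟩, hwe⟩
          rw [← hcomp e heD w hwe]
          exact hSC w hwS
        have hb1 := Finset.card_pos.mpr ⟨_, hcE⟩
        have : w ∈ SB := Finset.mem_filter.mpr ⟨hwS, by have := hbAt1 w; omega⟩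
        exact hwnSB this
    -- get the augmenting path
    obtain ⟨u, hu, v, hv, huv⟩ := Finset.one_lt_card.mp hX2
    have huS : u ∈ S := (Finset.mem_filter.mp (Finset.mem_sdiff.mp hu).1).1
    have hvS : v ∈ S := (Finset.mem_filter.mp (Finset.mem_sdiff.mp hv).1).1
    have hreach : H.Reachable u v :=
      SimpleGraph.ConnectedComponent.exact ((hSC u huS).trans (hSC v hvS).symm)
    obtain ⟨p0⟩ := hreach
    obtain ⟨p, hpath⟩ := p0.toPath
    have hne : p.edges ≠ [] := by
      intro hnil
      have hlen0 : p.length = 0 := by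
        rw [← SimpleGraph.Walk.length_edges, hnil]
        rfl
      exact huv (SimpleGraph.Walk.eq_of_length_eq_zero hlen0)
    have hlen : 2 * k + 1 ≤ p.length := h u v p hpath (hXunm u hu) (hXunm v hv) hne
    have hedgesD : ∀ e ∈ p.edges, e ∈ D :=
      fun e he => hHedge e (SimpleGraph.Walk.edges_subset_edgeSet _ he)
    have hchain := walk_edges_chain' p
    have hnodup : p.edges.Nodup := hpath.edges_nodup
    have hgen : ∀ l : List (Sym2 V), (∀ e ∈ l, e ∈ D) →
        l.Chain' (fun e f => ∃ x, x ∈ e ∧ x ∈ f) → l.Nodup →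
        l.Chain' (fun e f => (decide (e ∈ M)) = !decide (f ∈ M)) := by
      intro l
      induction l with
      | nil => intro _ _ _; exact List.isChain_nil
      | cons a t ih =>
        intro hmem hc hnd'
        cases t with
        | nil => exact List.isChain_singleton _
        | cons b t2 =>
          simp only [List.Chain'] at hc ⊢
          rw [List.isChain_cons_cons] at hc ⊢
          obtain ⟨⟨x, hx1, hx2⟩, hc'⟩ := hc
          have hne'' : a ≠ b := by
            intro hh
            rw [List.nodup_cons] at hnd'
            exact hnd'.1 (hh ▸ List.mem_cons_self)
          refine ⟨?_, ih (fun e he => hmem e (List.mem_cons_of_mem _ he)) hc'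
            (List.Nodup.of_cons hnd')⟩
          have haD : a ∈ D := hmem a (List.mem_cons_self)
          have hbD : b ∈ D := hmem b (List.mem_cons_of_mem _ (List.mem_cons_self))
          rcases (hDmem a).1 haD with ⟨h1, h2⟩ | ⟨h1, h2⟩ <;>
            rcases (hDmem b).1 hbD with ⟨h3, h4⟩ | ⟨h3, h4⟩
          · exact absurd hx2 (hMdisj _ h1 _ h3 hne'' x hx1)
          · simp [h1, h4]
          · simp [h2, h3]
          · exact absurd hx2 (hOdisj _ h1 _ h3 hne'' x hx1)
    have haltern : p.edges.Chain' (fun e f => (decide (e ∈ M)) = !decide (f ∈ M)) :=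
      hgen p.edges hedgesD hchain hnodup
    have hcount : k ≤ p.edges.countP (fun e => decide (e ∈ M)) := by
      have h1 := alt_countP _ p.edges haltern
      have h2 : p.edges.length = p.length := SimpleGraph.Walk.length_edges p
      omega
    have hmemsup : ∀ e ∈ p.edges, ∀ x ∈ e, x ∈ p.support := by
      intro e he
      induction e using Sym2.ind with
      | _ a b =>
        intro x hx
        rcases Sym2.mem_iff.mp hx with rfl | rfl
        · exact SimpleGraph.Walk.fst_mem_support_of_mem_edges _ he
        · exact SimpleGraph.Walk.snd_mem_support_of_mem_edges _ he
    have hsub : (p.edges.filter (fun e => decide (e ∈ M))).toFinset ⊆ BC C := by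
      intro e he
      rw [List.mem_toFinset, List.mem_filter] at he
      obtain ⟨hep, heM'⟩ := he
      have heM : e ∈ M := of_decide_eq_true heM'
      have heD : e ∈ D := hedgesD e hep
      have heO : e ∉ Mopt := by
        rcases (hDmem e).1 heD with ⟨_, h2⟩ | ⟨_, h2⟩
        · exact h2
        · exact absurd heM h2
      refine Finset.mem_filter.mpr ⟨Finset.mem_sdiff.mpr ⟨heM, heO⟩, ?_⟩
      rw [← hcomp e heD e.out.1 e.out_fst_mem]
      have hxs : e.out.1 ∈ p.support := hmemsup e hep _ e.out_fst_mem
      have hru : H.Reachable u e.out.1 := (p.takeUntil _ hxs).reachable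
      rw [← SimpleGraph.ConnectedComponent.sound hru]
      exact hSC u huS
    have hcard : k ≤ (BC C).card := by
      have hnd2 := hnodup.filter (fun e => decide (e ∈ M))
      have hcc : (p.edges.filter (fun e => decide (e ∈ M))).toFinset.card
          = p.edges.countP (fun e => decide (e ∈ M)) := by
        rw [List.toFinset_card_of_nodup hnd2, ← List.countP_eq_length_filter]
      have := Finset.card_le_card hsub
      omega
    rw [hAB, Nat.mul_succ, Nat.succ_mul]
    exact Nat.add_le_add_left hcard _
  -- summing up
  have hsumA : (Mopt \ M).card = ∑ C, (AC C).card :=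
    Finset.card_eq_sum_card_fiberwise (fun e _ => Finset.mem_univ (comp e))
  have hsumB : (M \ Mopt).card = ∑ C, (BC C).card :=
    Finset.card_eq_sum_card_fiberwise (fun e _ => Finset.mem_univ (comp e))
  have htot : k * (Mopt \ M).card ≤ (k + 1) * (M \ Mopt).card := by
    rw [hsumA, hsumB, Finset.mul_sum, Finset.mul_sum]
    exact Finset.sum_le_sum fun C _ => key C
  have hnat : k * Mopt.card ≤ (k + 1) * M.card := by
    have h1 := Finset.card_sdiff_add_card_inter Mopt M
    have h2 := Finset.card_sdiff_add_card_inter M Mopt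
    have hint : (Mopt ∩ M).card = (M ∩ Mopt).card := by rw [Finset.inter_comm]
    calc k * Mopt.card = k * (Mopt \ M).card + k * (Mopt ∩ M).card := by
          rw [← Nat.mul_add, h1]
      _ ≤ (k + 1) * (M \ Mopt).card + (k + 1) * (M ∩ Mopt).card :=
          Nat.add_le_add htot (by rw [hint]; exact Nat.mul_le_mul_right _ (Nat.le_succ k))
      _ = (k + 1) * M.card := by rw [← Nat.mul_add, h2]
  have hk0 : (0 : ℝ) < k := by exact_mod_cast hk
  rw [div_mul_eq_mul_div, le_div_iff₀ hk0]
  have := (Nat.cast_le (α := ℝ)).mpr hnat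
  push_cast at this
  nlinarith [this]
end
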